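/- arXiv:2406.17410 — 2 statements merged into one kernel-verified Lean document; each statement's English description precedes it below -/
import Mathlib

section
/- Assume h ≥ 0 on [0,1] and H > 0 on (0,1]. Let u be a solution of the traveling-wave problem with speed c > 0, and suppose there exist β ∈ ℝ, γ > 0 and positive finite limits lim_{v→1−} D(v)/(1−v)^β and lim_{v→1−} g(v)/(1−v)^γ, with γ + β/(p−1) > 1/(p−1). If γ < 1, then u attains the value 1, i.e., there exists ξ ∈ ℝ with u(ξ) = 1. If γ ≥ 1, then u(ξ) < 1 for all ξ ∈ ℝ. -/
open Set MeasureTheory Filter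

/-- The conjugate exponent `p' = p/(p-1)`. -/
noncomputable def pconj (p : ℝ) : ℝ := p / (p - 1)

/-- The constant `k(p)` from the paper. -/
noncomputable def kfun (p : ℝ) : ℝ :=
  if p < 2 then 1 / (2 ^ (pconj p - 1) - 1)
  else if p = 2 then 1
  else pconj p / (pconj p - 1 +
    (1 + pconj p * (pconj p - 1) ^ ((1 : ℝ) / (pconj p - 2)) +
      (pconj p - 1) ^ (pconj p / (pconj p - 2))) /
    (1 + (pconj p - 1) ^ ((1 : ℝ) / (pconj p - 2))) ^ pconj p)

/-- Standing assumptions on the data `p, θ, D, H, h, g` (combustion setting). -/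
structure CombSetup (p θ : ℝ) (D H h g : ℝ → ℝ) : Prop where
  hp : 1 < p
  hθ0 : 0 < θ
  hθ1 : θ < 1
  hD : ContDiffOn ℝ 1 D (Ioo 0 1)
  hDpos : ∀ v ∈ Ioo (0 : ℝ) 1, 0 < D v
  hH : ContDiffOn ℝ 1 H (Icc 0 1)
  hH0 : H 0 = 0
  hh : ContinuousOn h (Icc 0 1)
  hHd : ∀ v ∈ Icc (0 : ℝ) 1, HasDerivWithinAt H (h v) (Icc 0 1) v
  hgc : ContinuousOn g (Icc 0 1)
  hg0 : ∀ v ∈ Icc (0 : ℝ) θ, g v = 0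
  hgpos : ∀ v ∈ Ioo θ 1, 0 < g v
  hg1 : g 1 = 0
  hInt : IntegrableOn (fun v => D v ^ (pconj p - 1) * g v) (Ioo 0 1)

/-- The diffusive flux `ξ ↦ D(u(ξ)) |u'(ξ)|^{p-2} u'(ξ)`. -/
noncomputable def flux (p : ℝ) (D u : ℝ → ℝ) : ℝ → ℝ :=
  fun ξ => D (u ξ) * (|deriv u ξ| ^ (p - 2) * deriv u ξ)

/-- Solution of the traveling-wave problem with speed `c`. -/
structure IsTWSol (p c : ℝ) (D h g : ℝ → ℝ) (u : ℝ → ℝ) : Prop where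
  cont : Continuous u
  mem : ∀ ξ, u ξ ∈ Icc (0 : ℝ) 1
  smooth : ContDiffOn ℝ 1 u {ξ | u ξ ∈ Ioo (0 : ℝ) 1}
  eqn : ∀ ξ ∈ {ξ | u ξ ∈ Ioo (0 : ℝ) 1},
    HasDerivAt (flux p D u) (-(c + h (u ξ)) * deriv u ξ - g (u ξ)) ξ
  flux_cont : Continuous (fun ξ => if u ξ ∈ Ioo (0 : ℝ) 1 then flux p D u ξ else 0)
  flux_to0 : ∀ ε > 0, ∃ δ > 0, ∀ ξ, u ξ ∈ Ioo (0 : ℝ) 1 → u ξ < δ → |flux p D u ξ| < ε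
  flux_to1 : ∀ ε > 0, ∃ δ > 0, ∀ ξ, u ξ ∈ Ioo (0 : ℝ) 1 → 1 - δ < u ξ → |flux p D u ξ| < ε
  lim_bot : Tendsto u atBot (nhds 1)
  lim_top : Tendsto u atTop (nhds 0)

/-- Positive solution of the first-order problem with parameter `c`. -/
structure IsFOSol (p c : ℝ) (D h g : ℝ → ℝ) (y : ℝ → ℝ) : Prop where
  cont : ContinuousOn y (Icc 0 1)
  eqn : ∀ v ∈ Ioo (0 : ℝ) 1, HasDerivAt y
    (pconj p * ((c + h v) * (max (y v) 0) ^ (1 / p) - D v ^ (pconj p - 1) * g v)) v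
  y0 : y 0 = 0
  y1 : y 1 = 0
  pos : ∀ v ∈ Ioo (0 : ℝ) 1, 0 < y v
open Topology


/-- Constancy on a closed interval from zero derivative on the open interval. -/
lemma my_const_of_deriv_zero {f : ℝ → ℝ} {a b : ℝ} (hab : a < b)
    (hc : ContinuousOn f (Icc a b)) (hd : ∀ x ∈ Ioo a b, HasDerivAt f 0 x) :
    f b = f a := by
  have step1 : ∀ x ∈ Ioo a b, f b = f x := by
    intro x hx
    have h1 : ContinuousOn f (Icc x b) := hc.mono (Icc_subset_Icc hx.1.le le_rfl)
    have h2 : ∀ y ∈ Ico x b, HasDerivWithinAt f 0 (Ici y) y := fun y hy =>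
      (hd y ⟨lt_of_lt_of_le hx.1 hy.1, hy.2⟩).hasDerivWithinAt
    exact constant_of_has_deriv_right_zero h1 h2 b ⟨hx.2.le, le_rfl⟩
  have hne : (𝓝[Ioo a b] a).NeBot := by
    rw [← mem_closure_iff_nhdsWithin_neBot, closure_Ioo hab.ne]
    exact ⟨le_rfl, hab.le⟩
  have t1 : Tendsto f (𝓝[Ioo a b] a) (𝓝 (f a)) :=
    ((hc a ⟨le_rfl, hab.le⟩).mono Ioo_subset_Icc_self).tendsto
  have t2 : Tendsto f (𝓝[Ioo a b] a) (𝓝 (f b)) := by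
    refine Tendsto.congr' ?_ (tendsto_const_nhds : Tendsto (fun _ => f b) _ _)
    filter_upwards [eventually_mem_nhdsWithin] with x hx
    exact step1 x hx
  exact tendsto_nhds_unique t2 t1

/-- Crossing lemma: if at each zero the derivative is positive, and there are
nonnegative seeds arbitrarily far to the left, then the function is positive. -/
lemma my_crossing {ψ : ℝ → ℝ} {R : ℝ} (hcont : Continuous ψ)
    (hzero : ∀ ξ ≤ R, ψ ξ = 0 → ∃ d, 0 < d ∧ HasDerivAt ψ d ξ)
    (hseed : ∀ ξ₁ ≤ R, ∃ ξ₀, ξ₀ ≤ ξ₁ ∧ 0 ≤ ψ ξ₀) :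
    ∀ ξ ≤ R, 0 < ψ ξ := by
  have claim1 : ∀ ξ ≤ R, 0 ≤ ψ ξ := by
    intro ξ hξ
    by_contra hneg
    push_neg at hneg
    obtain ⟨ξ₀, hξ₀le, hξ₀⟩ := hseed ξ hξ
    have hξ₀ξ : ξ₀ < ξ := by
      rcases lt_or_eq_of_le hξ₀le with h | h
      · exact h
      · exfalso; rw [h] at hξ₀; linarith
    set E := Icc ξ₀ ξ ∩ {s | 0 ≤ ψ s} with hE
    have hEcomp : IsCompact E :=
      isCompact_Icc.inter_right (isClosed_le continuous_const hcont)
    have hEne : E.Nonempty := ⟨ξ₀, ⟨le_rfl, hξ₀ξ.le⟩, hξ₀⟩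
    set m := sSup E with hm
    have hmE : m ∈ E := hEcomp.sSup_mem hEne
    have hmIcc : m ∈ Icc ξ₀ ξ := hmE.1
    have hmψ : 0 ≤ ψ m := hmE.2
    have hmlt : m < ξ := lt_of_le_of_ne hmIcc.2 (by intro hmeq; rw [hmeq] at hmψ; linarith)
    have hsup : ∀ s ∈ E, s ≤ m := fun s hs => le_csSup hEcomp.bddAbove hs
    -- A point strictly to the right of `m`, still `≤ ξ`, with `0 < ψ`, contradicts `sSup`.
    have key : ¬ (∀ᶠ s in 𝓝[>] m, 0 < ψ s) := by
      intro hev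
      have hIoo : Ioo m ξ ∈ 𝓝[>] m := Ioo_mem_nhdsGT hmlt
      obtain ⟨s, hs1, hs2⟩ := (hev.and (eventually_of_mem hIoo (fun s hs => hs))).exists
      exact absurd (hsup s ⟨⟨hmIcc.1.trans hs2.1.le, hs2.2.le⟩, hs1.le⟩) (not_le.2 hs2.1)
    have hmzero : ψ m = 0 := by
      by_contra hne0
      have hpos : 0 < ψ m := lt_of_le_of_ne hmψ (Ne.symm hne0)
      exact key ((hcont.continuousAt.eventually (eventually_gt_nhds hpos)).filter_mono
          nhdsWithin_le_nhds)
    obtain ⟨d, hd0, hd⟩ := hzero m (hmIcc.2.trans hξ) hmzero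
    apply key
    have hslope : Tendsto (slope ψ m) (𝓝[≠] m) (𝓝 d) :=
      hasDerivAt_iff_tendsto_slope.1 hd
    have hev : ∀ᶠ s in 𝓝[≠] m, 0 < slope ψ m s := hslope.eventually (eventually_gt_nhds hd0)
    have hev' : ∀ᶠ s in 𝓝[>] m, 0 < slope ψ m s :=
      hev.filter_mono (nhdsWithin_mono m (fun s hs => ne_of_gt hs))
    filter_upwards [hev', self_mem_nhdsWithin] with s hs hs'
    rw [slope_def_field, hmzero, sub_zero] at hs
    have hsm : 0 < s - m := sub_pos.2 hs'
    rcases div_pos_iff.1 hs with h | h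
    · exact h.1
    · linarith [h.2]
  -- strict positivity
  intro ξ hξ
  rcases lt_or_eq_of_le (claim1 ξ hξ) with h | h
  · exact h
  obtain ⟨d, hd0, hd⟩ := hzero ξ hξ h.symm
  exfalso
  have hslope : Tendsto (slope ψ ξ) (𝓝[≠] ξ) (𝓝 d) := hasDerivAt_iff_tendsto_slope.1 hd
  have hev : ∀ᶠ s in 𝓝[≠] ξ, 0 < slope ψ ξ s := hslope.eventually (eventually_gt_nhds hd0)
  have hev' : ∀ᶠ s in 𝓝[<] ξ, 0 < slope ψ ξ s :=
    hev.filter_mono (nhdsWithin_mono ξ (fun s hs => ne_of_lt hs))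
  obtain ⟨s, hs1, hs2⟩ := (hev'.and self_mem_nhdsWithin).exists
  rw [slope_def_field] at hs1
  have hsm : s - ξ < 0 := sub_neg.2 hs2
  have h1 : ψ s - ψ ξ < 0 := by
    by_contra hcon
    push_neg at hcon
    have := div_nonpos_of_nonneg_of_nonpos hcon hsm.le
    linarith
  rw [← h] at h1
  have := claim1 s (le_of_lt (lt_of_lt_of_le hs2 hξ))
  linarith

/-- Two-sided bounds near `1⁻` from a positive limit of `f v / (1-v)^e`. -/
lemma my_bounds_of_tendsto {f : ℝ → ℝ} {e M : ℝ} (hM : 0 < M)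
    (h : Tendsto (fun v => f v / (1 - v) ^ e) (𝓝[<] (1:ℝ)) (𝓝 M)) :
    ∃ η : ℝ, η < 1 ∧ ∀ v, η < v → v < 1 →
      M / 2 * (1 - v) ^ e ≤ f v ∧ f v ≤ 2 * M * (1 - v) ^ e := by
  have h1 : ∀ᶠ v in 𝓝[<] (1:ℝ),
      M / 2 < f v / (1 - v) ^ e ∧ f v / (1 - v) ^ e < 2 * M := by
    filter_upwards [h.eventually (eventually_gt_nhds (by linarith : M / 2 < M)),
      h.eventually (eventually_lt_nhds (by linarith : M < 2 * M))] with v h1 h2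
    exact ⟨h1, h2⟩
  obtain ⟨l, hl, hsub⟩ := (mem_nhdsLT_iff_exists_Ioo_subset' (by linarith : (0:ℝ) < 1)).1 h1
  refine ⟨max l 0, max_lt hl zero_lt_one, fun v hv hv1 => ?_⟩
  have hmem := hsub ⟨lt_of_le_of_lt (le_max_left l 0) hv, hv1⟩
  have ht : (0:ℝ) < (1 - v) ^ e := Real.rpow_pos_of_pos (by linarith) e
  constructor
  · have := (lt_div_iff₀ ht).1 hmem.1
    linarith
  · have := (div_lt_iff₀ ht).1 hmem.2
    linarith

lemma my_exists_small {A e : ℝ} (hA : 0 < A) (he : 0 < e) :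
    ∃ ε > 0, ∀ x : ℝ, 0 < x → x ≤ ε → x ^ e < A := by
  refine ⟨(A / 2) ^ e⁻¹, Real.rpow_pos_of_pos (by linarith) _, fun x hx hxe => ?_⟩
  calc x ^ e ≤ ((A / 2) ^ e⁻¹) ^ e := Real.rpow_le_rpow hx.le hxe he.le
  _ = A / 2 := Real.rpow_inv_rpow (by linarith) he.ne'
  _ < A := by linarith

lemma my_sign_neg {Dv d pp : ℝ} (hDv : 0 < Dv) (h : 0 < -(Dv * (|d| ^ pp * d))) :
    d < 0 := by
  rcases lt_trichotomy d 0 with h' | h' | h'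
  · exact h'
  · rw [h'] at h; simp at h
  · exfalso
    have : 0 < Dv * (|d| ^ pp * d) :=
      mul_pos hDv (mul_pos (Real.rpow_pos_of_pos (abs_pos.2 h'.ne') _) h')
    linarith

lemma my_sign_pos {Dv d pp : ℝ} (hDv : 0 < Dv) (h : 0 < Dv * (|d| ^ pp * d)) :
    0 < d := by
  rcases lt_trichotomy d 0 with h' | h' | h'
  · exfalso
    have : Dv * (|d| ^ pp * d) < 0 :=
      mul_neg_of_pos_of_neg hDv (mul_neg_of_pos_of_neg (Real.rpow_pos_of_pos (abs_pos.2 h'.ne) _) h')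
    linarith
  · rw [h'] at h; simp at h
  · exact h'

lemma my_sign_zero {Dv d pp : ℝ} (hDv : 0 < Dv) (h : Dv * (|d| ^ pp * d) = 0) :
    d = 0 := by
  rcases lt_trichotomy d 0 with h' | h' | h'
  · exfalso
    have : Dv * (|d| ^ pp * d) < 0 :=
      mul_neg_of_pos_of_neg hDv (mul_neg_of_pos_of_neg (Real.rpow_pos_of_pos (abs_pos.2 h'.ne) _) h')
    linarith
  · exact h'
  · exfalso
    have : 0 < Dv * (|d| ^ pp * d) :=
      mul_pos hDv (mul_pos (Real.rpow_pos_of_pos (abs_pos.2 h'.ne') _) h')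
    linarith

lemma my_flux_formula {p Dv d : ℝ} (hd : d < 0) :
    Dv * (|d| ^ (p - 2) * d) = -(Dv * (-d) ^ (p - 1)) := by
  have hnd : (0:ℝ) < -d := neg_pos.2 hd
  have h2 : (-d : ℝ) ^ (p - 1) = (-d) ^ (p - 2) * (-d) := by
    rw [show p - 1 = (p - 2) + 1 by ring, Real.rpow_add_one hnd.ne']
  rw [abs_of_neg hd, h2]; ring

lemma my_flux_invert {p Dv d ζ : ℝ} (hp : 1 < p) (hDv : 0 < Dv) (hd : d < 0)
    (h : ζ = Dv * (-d) ^ (p - 1)) : -d = (ζ / Dv) ^ (p - 1)⁻¹ := by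
  have hnd : (0:ℝ) ≤ -d := by linarith
  have h' : ζ / Dv = (-d) ^ (p - 1) := by rw [h]; field_simp
  rw [h', Real.rpow_rpow_inv hnd (by intro hc; rw [sub_eq_zero] at hc; linarith)]

lemma my_rpow_div_le {ζ Dv w c1 σ b pr g' : ℝ} (hw : 0 < w) (hζ : 0 ≤ ζ) (hDv : 0 < Dv)
    (hc1 : 0 < c1) (hle : ζ ≤ w ^ σ) (hD : c1 * w ^ b ≤ Dv)
    (hpr : 0 < pr) (hrel : (σ - b) * pr = g') :
    (ζ / Dv) ^ pr ≤ c1⁻¹ ^ pr * w ^ g' := by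
  have hwb : (0:ℝ) < w ^ b := Real.rpow_pos_of_pos hw b
  have h1 : ζ / Dv ≤ c1⁻¹ * w ^ (σ - b) := by
    have hd : ζ / Dv ≤ w ^ σ / (c1 * w ^ b) :=
      div_le_div₀ (Real.rpow_nonneg hw.le σ) hle (by positivity) hD
    have he : w ^ σ / (c1 * w ^ b) = c1⁻¹ * w ^ (σ - b) := by
      rw [Real.rpow_sub hw]
      field_simp
    rw [he] at hd; exact hd
  calc (ζ / Dv) ^ pr ≤ (c1⁻¹ * w ^ (σ - b)) ^ pr :=
        Real.rpow_le_rpow (div_nonneg hζ hDv.le) h1 hpr.le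
  _ = c1⁻¹ ^ pr * w ^ g' := by
      rw [Real.mul_rpow (by positivity) (Real.rpow_nonneg hw.le _),
        ← Real.rpow_mul hw.le, hrel]

lemma my_le_rpow_div {ζ Dv w c2 σ b pr g' : ℝ} (hw : 0 < w) (hDv : 0 < Dv)
    (hc2 : 0 < c2) (hge : w ^ σ ≤ ζ) (hD : Dv ≤ c2 * w ^ b)
    (hpr : 0 < pr) (hrel : (σ - b) * pr = g') :
    c2⁻¹ ^ pr * w ^ g' ≤ (ζ / Dv) ^ pr := by
  have hwb : (0:ℝ) < w ^ b := Real.rpow_pos_of_pos hw b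
  have h1 : c2⁻¹ * w ^ (σ - b) ≤ ζ / Dv := by
    have hd : w ^ σ / (c2 * w ^ b) ≤ ζ / Dv :=
      div_le_div₀ (le_trans (Real.rpow_nonneg hw.le σ) hge) hge hDv hD
    have he : w ^ σ / (c2 * w ^ b) = c2⁻¹ * w ^ (σ - b) := by
      rw [Real.rpow_sub hw]; field_simp
    rw [he] at hd; exact hd
  calc c2⁻¹ ^ pr * w ^ g' = (c2⁻¹ * w ^ (σ - b)) ^ pr := by
        rw [Real.mul_rpow (by positivity) (Real.rpow_nonneg hw.le _),
          ← Real.rpow_mul hw.le, hrel]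
  _ ≤ (ζ / Dv) ^ pr := Real.rpow_le_rpow (by positivity) h1 hpr.le

lemma my_mono_Iic {f : ℝ → ℝ} {b : ℝ} (hc : ContinuousOn f (Iic b))
    (hd : ∀ x < b, ∃ d, 0 ≤ d ∧ HasDerivAt f d x) : MonotoneOn f (Iic b) := by
  apply monotoneOn_of_deriv_nonneg (convex_Iic b) hc
  · intro x hx
    rw [interior_Iic] at hx
    obtain ⟨d, _, hdd⟩ := hd x hx
    exact hdd.differentiableAt.differentiableWithinAt
  · intro x hx
    rw [interior_Iic] at hx
    obtain ⟨d, hd0, hdd⟩ := hd x hx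
    rw [hdd.deriv]; exact hd0

lemma my_strictmono_Iic {f : ℝ → ℝ} {b : ℝ} (hc : ContinuousOn f (Iic b))
    (hd : ∀ x < b, ∃ d, 0 < d ∧ HasDerivAt f d x) : StrictMonoOn f (Iic b) := by
  apply strictMonoOn_of_deriv_pos (convex_Iic b) hc
  intro x hx
  rw [interior_Iic] at hx
  obtain ⟨d, hd0, hdd⟩ := hd x hx
  rw [hdd.deriv]; exact hd0

lemma my_le_of_mono_tendsto {f : ℝ → ℝ} {b A : ℝ} (hm : MonotoneOn f (Iic b))
    (hl : Tendsto f atBot (𝓝 A)) : A ≤ f b := by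
  apply le_of_tendsto hl
  filter_upwards [eventually_le_atBot b] with x hx
  exact hm (mem_Iic.2 hx) (mem_Iic.2 le_rfl) hx

lemma my_key_small {Kp C3 Wγ Wd Mc : ℝ} (hKp : 0 < Kp) (hC3 : 0 < C3) (hWγ : 0 < Wγ)
    (hWd : Wd < Mc / (Kp * C3)) : Kp * (C3 * (Wγ * Wd)) < Mc * Wγ := by
  have h1 : Kp * C3 * Wd < Mc := by
    have h2 := mul_lt_mul_of_pos_left hWd (mul_pos hKp hC3)
    have h3 : Kp * C3 * (Mc / (Kp * C3)) = Mc := by field_simp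
    linarith
  calc Kp * (C3 * (Wγ * Wd)) = Kp * C3 * Wd * Wγ := by ring
  _ < Mc * Wγ := mul_lt_mul_of_pos_right h1 hWγ

lemma my_arith1 {gv chv m s K X Wγ Wσ1 M : ℝ}
    (f1 : M / 2 * Wγ ≤ gv) (f2 : m ≤ X) (f3 : 0 ≤ m)
    (f4 : chv ≤ K) (hK : 0 ≤ K)
    (f6 : Wσ1 ≤ 1) (f7 : 0 ≤ Wσ1) (hs : 0 ≤ s) (hX : 0 ≤ X)
    (f8 : K * X + X * s < M / 2 * Wγ) :
    0 < gv - chv * m - m * s * Wσ1 := by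
  have e1 : chv * m ≤ K * X := mul_le_mul f4 f2 f3 hK
  have e2 : m * s * Wσ1 ≤ X * s := by
    have h1 : 0 ≤ m * s := mul_nonneg f3 hs
    calc m * s * Wσ1 ≤ m * s * 1 := mul_le_mul_of_nonneg_left f6 h1
    _ = m * s := mul_one _
    _ ≤ X * s := mul_le_mul_of_nonneg_right f2 hs
  linarith

lemma my_arith2 {gv chv m τ c6 K X Wγ Wτ1 M : ℝ}
    (f1 : M / 2 * Wγ ≤ gv) (f2 : m ≤ X) (f3 : 0 ≤ m) (f4 : chv ≤ K) (hK : 0 ≤ K)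
    (hτ : 0 ≤ τ) (hc6 : 0 ≤ c6) (hWτ1 : 0 ≤ Wτ1) (hMW : 0 ≤ M * Wγ)
    (e5 : K * X ≤ M / 8 * Wγ)
    (e6 : c6 * (X * τ * Wτ1) ≤ M / 8 * Wγ) :
    0 ≤ gv - chv * m - c6 * (m * τ * Wτ1) := by
  have e1 : chv * m ≤ K * X := mul_le_mul f4 f2 f3 hK
  have e2 : c6 * (m * τ * Wτ1) ≤ c6 * (X * τ * Wτ1) := by
    apply mul_le_mul_of_nonneg_left _ hc6
    exact mul_le_mul_of_nonneg_right (mul_le_mul_of_nonneg_right f2 hτ) hWτ1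
  linarith

set_option maxHeartbeats 2000000 in
/-- Asymptotics near 1, second regime. -/
theorem stmt18 (p θ c β γ : ℝ) (D H h g u : ℝ → ℝ) (S : CombSetup p θ D H h g)
    (hh0 : ∀ v ∈ Icc (0 : ℝ) 1, 0 ≤ h v)
    (hHpos : ∀ v ∈ Ioc (0 : ℝ) 1, 0 < H v)
    (hc : 0 < c) (hu : IsTWSol p c D h g u)
    (hγ : 0 < γ)
    (hDlim : ∃ L > (0 : ℝ),
      Tendsto (fun v => D v / (1 - v) ^ β) (nhdsWithin 1 (Iio (1 : ℝ))) (nhds L))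
    (hglim : ∃ M > (0 : ℝ),
      Tendsto (fun v => g v / (1 - v) ^ γ) (nhdsWithin 1 (Iio (1 : ℝ))) (nhds M))
    (h1 : 1 / (p - 1) < γ + β / (p - 1)) :
    (γ < 1 → ∃ ξ : ℝ, u ξ = 1) ∧
    (1 ≤ γ → ∀ ξ : ℝ, u ξ < 1) := by
  classical
  obtain ⟨L, hL, hDt⟩ := hDlim
  obtain ⟨M, hM, hgt⟩ := hglim
  have hp1 : (0:ℝ) < p - 1 := by linarith [S.hp]
  set pr : ℝ := (p - 1)⁻¹ with hprdef
  have hpr : 0 < pr := inv_pos.2 hp1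
  set q : ℝ → ℝ := fun ξ => if u ξ ∈ Ioo (0:ℝ) 1 then flux p D u ξ else 0 with hqdef
  have hqc : Continuous q := hu.flux_cont
  have hUopen : IsOpen {ξ | u ξ ∈ Ioo (0:ℝ) 1} := isOpen_Ioo.preimage hu.cont
  have hudiff : ∀ ξ, u ξ ∈ Ioo (0:ℝ) 1 → HasDerivAt u (deriv u ξ) ξ := by
    intro ξ hξ
    exact ((hu.smooth.differentiableOn one_ne_zero).differentiableAt
      (hUopen.mem_nhds hξ)).hasDerivAt
  have hqeq : ∀ ξ, u ξ ∈ Ioo (0:ℝ) 1 → q ξ = flux p D u ξ := fun ξ hξ => if_pos hξ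
  have hqd : ∀ ξ, u ξ ∈ Ioo (0:ℝ) 1 →
      HasDerivAt q (-(c + h (u ξ)) * deriv u ξ - g (u ξ)) ξ := by
    intro ξ hξ
    refine (hu.eqn ξ hξ).congr_of_eventuallyEq ?_
    filter_upwards [hUopen.mem_nhds hξ] with s hs
    exact if_pos hs
  obtain ⟨ηg, hηg1, hgb⟩ := my_bounds_of_tendsto hM hgt
  obtain ⟨ηD, hηD1, hDb⟩ := my_bounds_of_tendsto hL hDt
  obtain ⟨Ch, hCh⟩ := isCompact_Icc.exists_bound_of_continuousOn S.hh
  have hChb : ∀ v ∈ Icc (0:ℝ) 1, h v ≤ Ch := fun v hv =>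
    (le_abs_self _).trans (by simpa using hCh v hv)
  have hCh0 : 0 ≤ Ch := le_trans (abs_nonneg _) (by simpa using hCh 0 ⟨le_rfl, zero_le_one⟩)
  set K : ℝ := c + Ch with hKdef
  have hK : 0 < K := by linarith
  have hKb : ∀ v ∈ Icc (0:ℝ) 1, c + h v ≤ K := fun v hv => by
    have := hChb v hv; simp only [hKdef]; linarith
  have hKc : ∀ v ∈ Icc (0:ℝ) 1, 0 < c + h v := fun v hv => by
    have := hh0 v hv; linarith
  -- monotonicity of H
  have hHmono : MonotoneOn H (Icc (0:ℝ) 1) := by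
    apply monotoneOn_of_deriv_nonneg (convex_Icc 0 1) S.hH.continuousOn
    · intro x hx
      rw [interior_Icc] at hx
      exact ((S.hHd x ⟨hx.1.le, hx.2.le⟩).hasDerivAt
        (Icc_mem_nhds hx.1 hx.2)).differentiableAt.differentiableWithinAt
    · intro x hx
      rw [interior_Icc] at hx
      rw [((S.hHd x ⟨hx.1.le, hx.2.le⟩).hasDerivAt (Icc_mem_nhds hx.1 hx.2)).deriv]
      exact hh0 x ⟨hx.1.le, hx.2.le⟩
  constructor
  · -- γ < 1 : u attains 1
    intro hγlt
    by_contra hno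
    push_neg at hno
    have hall : ∀ ξ, u ξ < 1 := fun ξ => lt_of_le_of_ne (hu.mem ξ).2 (hno ξ)
    -- exponents
    set γ' : ℝ := (1 + γ)/2 with hγ'def
    have hγ'γ : γ < γ' := by rw [hγ'def]; linarith
    have hγ'1 : γ' < 1 := by rw [hγ'def]; linarith
    have hγ'0 : 0 < γ' := by rw [hγ'def]; linarith
    set σ : ℝ := β + γ' * (p - 1) with hσdef
    have h1' : 1 < γ * (p - 1) + β := by
      have h2 := mul_lt_mul_of_pos_right h1 hp1
      rw [div_mul_cancel₀ _ (ne_of_gt hp1), add_mul, div_mul_cancel₀ _ (ne_of_gt hp1)] at h2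
      linarith
    have hσ1 : 1 < σ := by
      have := mul_lt_mul_of_pos_right hγ'γ hp1
      rw [hσdef]; linarith
    have hσpos : 0 < σ := by linarith
    have hrel1 : (σ - β) * pr = γ' := by
      have hsb : σ - β = γ' * (p - 1) := by rw [hσdef]; ring
      rw [hsb, hprdef, mul_assoc, mul_inv_cancel₀ (ne_of_gt hp1), mul_one]
    -- constants
    set C3 : ℝ := ((L/2)⁻¹) ^ pr with hC3def
    have hC3 : 0 < C3 := Real.rpow_pos_of_pos (by positivity) _
    set C7 : ℝ := ((2*L)⁻¹) ^ pr with hC7def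
    have hC7 : 0 < C7 := Real.rpow_pos_of_pos (by positivity) _
    set c6 : ℝ := M / (8 * γ' * C3) with hc6def
    have hc6 : 0 < c6 := by
      apply div_pos hM
      positivity
    set bC : ℝ := (1 - γ') * C7 with hbCdef
    have hbC : 0 < bC := mul_pos (by linarith) hC7
    -- smallness thresholds
    obtain ⟨ε₁, hε₁, hε₁p⟩ := my_exists_small
      (show (0:ℝ) < M/2/((K + σ)*C3) from div_pos (by linarith) (mul_pos (by linarith) hC3))
      (show (0:ℝ) < γ' - γ by linarith)
    obtain ⟨ε₂, hε₂, hε₂p⟩ := my_exists_small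
      (show (0:ℝ) < M/8/(K*C3) from div_pos (by linarith) (mul_pos hK hC3))
      (show (0:ℝ) < γ' - γ by linarith)
    obtain ⟨ε₃, hε₃, hε₃p⟩ := my_exists_small hc6 (show (0:ℝ) < σ - γ' by linarith)
    set ε0 : ℝ := min (min ε₁ ε₂) (min ε₃ 1) with hε0def
    have hε0 : 0 < ε0 := lt_min (lt_min hε₁ hε₂) (lt_min hε₃ one_pos)
    have hε0₁ : ε0 ≤ ε₁ := le_trans (min_le_left _ _) (min_le_left _ _)
    have hε0₂ : ε0 ≤ ε₂ := le_trans (min_le_left _ _) (min_le_right _ _)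
    have hε0₃ : ε0 ≤ ε₃ := le_trans (min_le_right _ _) (min_le_left _ _)
    have hε0one : ε0 ≤ 1 := le_trans (min_le_right _ _) (min_le_right _ _)
    -- the ray
    set η3 : ℝ := max (max ηg ηD) (max θ (max (1/2) (1 - ε0))) with hη3def
    have hη31 : η3 < 1 :=
      max_lt (max_lt hηg1 hηD1) (max_lt S.hθ1 (max_lt (by norm_num) (by linarith)))
    have hη3half : (1:ℝ)/2 ≤ η3 :=
      le_trans (le_trans (le_max_left _ _) (le_max_right _ _)) (le_max_right _ _)
    have hη3θ : θ ≤ η3 := le_trans (le_max_left _ _) (le_max_right _ _)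
    have hη3g : ηg ≤ η3 := le_trans (le_max_left _ _) (le_max_left _ _)
    have hη3D : ηD ≤ η3 := le_trans (le_max_right _ _) (le_max_left _ _)
    have hη3ε : 1 - ε0 ≤ η3 :=
      le_trans (le_trans (le_max_right _ _) (le_max_right _ _)) (le_max_right _ _)
    obtain ⟨ξA, hξA⟩ := eventually_atBot.1 (hu.lim_bot.eventually (eventually_gt_nhds hη31))
    -- region facts
    have hmem' : ∀ ξ ≤ ξA, u ξ ∈ Ioo (0:ℝ) 1 := by
      intro ξ hξ
      have h2 := hξA ξ hξ
      exact ⟨by linarith, hall ξ⟩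
    have hWpos : ∀ ξ : ℝ, 0 < 1 - u ξ := fun ξ => by linarith [hall ξ]
    have hWsmall : ∀ ξ ≤ ξA, 1 - u ξ ≤ ε0 := by
      intro ξ hξ
      have h2 := hξA ξ hξ
      linarith [le_trans hη3ε h2.le]
    have hgb' : ∀ ξ ≤ ξA, M/2*(1 - u ξ)^γ ≤ g (u ξ) ∧ g (u ξ) ≤ 2*M*(1 - u ξ)^γ :=
      fun ξ hξ => hgb (u ξ) (lt_of_le_of_lt hη3g (hξA ξ hξ)) (hall ξ)
    have hDb' : ∀ ξ ≤ ξA, L/2*(1 - u ξ)^β ≤ D (u ξ) ∧ D (u ξ) ≤ 2*L*(1 - u ξ)^β :=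
      fun ξ hξ => hDb (u ξ) (lt_of_le_of_lt hη3D (hξA ξ hξ)) (hall ξ)
    -- the function ζ = -flux
    set ζ : ℝ → ℝ := fun ξ => -(q ξ) with hζdef
    have hζc : Continuous ζ := hqc.neg
    have hζd : ∀ ξ, u ξ ∈ Ioo (0:ℝ) 1 →
        HasDerivAt ζ ((c + h (u ξ)) * deriv u ξ + g (u ξ)) ξ := by
      intro ξ hξ
      have h2 := (hqd ξ hξ).neg
      exact h2.congr_deriv (by ring)
    have hq0 : Tendsto q atBot (𝓝 0) := by
      rw [NormedAddCommGroup.tendsto_nhds_zero]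
      intro ε hε
      obtain ⟨δ, hδ, hfl⟩ := hu.flux_to1 ε hε
      filter_upwards [hu.lim_bot.eventually
        (eventually_gt_nhds (show 1 - δ < 1 by linarith))] with ξ hξ
      by_cases hmem : u ξ ∈ Ioo (0:ℝ) 1
      · simp only [hqdef, if_pos hmem, Real.norm_eq_abs]
        exact hfl ξ hmem hξ
      · simp only [hqdef, if_neg hmem, norm_zero]
        exact hε
    have hζ0 : Tendsto ζ atBot (𝓝 0) := by
      have := hq0.neg
      simpa using this
    have hw0 : Tendsto (fun ξ => 1 - u ξ) atBot (𝓝 0) := by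
      have := (tendsto_const_nhds (α := ℝ) (x := (1:ℝ)) (f := atBot)).sub hu.lim_bot
      simpa using this
    have hwpow0 : ∀ e : ℝ, 0 < e → Tendsto (fun x => (1 - u x) ^ e) atBot (𝓝 0) := by
      intro e he
      have hconte : ContinuousAt (fun y : ℝ => y ^ e) 0 :=
        Real.continuousAt_rpow_const _ _ (Or.inr he.le)
      have h2 := hconte.tendsto.comp hw0
      simpa [Function.comp_def, Real.zero_rpow he.ne'] using h2
    have hwcont : ∀ e : ℝ, 0 < e → Continuous (fun x => (1 - u x) ^ e) := by
      intro e he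
      refine continuous_iff_continuousAt.2 fun x => ?_
      exact (Real.continuousAt_rpow_const _ _ (Or.inr he.le)).comp
        ((continuous_const.sub hu.cont).continuousAt)
    -- STEP A : ζ > 0 on the ray
    have stepA : ∀ ξ ≤ ξA, 0 < ζ ξ := by
      apply my_crossing hζc
      · intro ξ hξ hζξ
        have hmem := hmem' ξ hξ
        have hgpos : 0 < g (u ξ) :=
          S.hgpos (u ξ) ⟨lt_of_le_of_lt hη3θ (hξA ξ hξ), hall ξ⟩
        have hqz : q ξ = 0 := by
          simp only [hζdef] at hζξ
          linarith
        rw [hqeq ξ hmem] at hqz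
        have hd0 : deriv u ξ = 0 := my_sign_zero (S.hDpos _ hmem) hqz
        refine ⟨g (u ξ), hgpos, ?_⟩
        have h2 := hζd ξ hmem
        rw [hd0] at h2
        simpa using h2
      · intro ξ₁ hξ₁
        by_contra hcon
        push_neg at hcon
        have hmono : StrictMonoOn u (Iic ξ₁) := by
          apply my_strictmono_Iic hu.cont.continuousOn
          intro x hx
          have hxA : x ≤ ξA := le_trans hx.le hξ₁
          have hmem := hmem' x hxA
          refine ⟨deriv u x, ?_, hudiff x hmem⟩
          apply my_sign_pos (S.hDpos _ hmem)
          have h0 : 0 < q x := by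
            have h2 := hcon x hx.le
            simp only [hζdef] at h2
            linarith
          rw [hqeq x hmem] at h0
          exact h0
        have hev3 : ∀ᶠ x in atBot, u x ≤ u (ξ₁ - 1) := by
          filter_upwards [eventually_le_atBot (ξ₁ - 1)] with x hx
          rcases lt_or_eq_of_le hx with h2 | h2
          · exact (hmono (mem_Iic.2 (by linarith)) (mem_Iic.2 (by linarith)) h2).le
          · rw [h2]
        have := le_of_tendsto hu.lim_bot hev3
        linarith [hall (ξ₁ - 1)]
    -- derivative formula on the ray
    have hformula : ∀ ξ ≤ ξA, deriv u ξ < 0 ∧ -(deriv u ξ) = (ζ ξ / D (u ξ)) ^ pr := by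
      intro ξ hξ
      have hmem := hmem' ξ hξ
      have hζp := stepA ξ hξ
      have hDp := S.hDpos _ hmem
      have hqval : q ξ = D (u ξ) * (|deriv u ξ| ^ (p-2) * deriv u ξ) := hqeq ξ hmem
      have hd : deriv u ξ < 0 := by
        apply my_sign_neg hDp
        simp only [hζdef, hqval] at hζp
        exact hζp
      refine ⟨hd, ?_⟩
      rw [hprdef]
      apply my_flux_invert S.hp hDp hd
      have h2 := my_flux_formula (p := p) (Dv := D (u ξ)) hd
      simp only [hζdef, hqval, h2]
      ring
    -- STEP B : ζ ≥ w^σ on the ray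
    have stepBpos : ∀ ξ ≤ ξA, 0 < ζ ξ - (1 - u ξ) ^ σ := by
      apply my_crossing (hζc.sub (hwcont σ hσpos))
      · -- zeros have positive derivative
        intro ξ hξ hψ0
        have hmem := hmem' ξ hξ
        have hζp := stepA ξ hξ
        obtain ⟨hd, hform⟩ := hformula ξ hξ
        have hW : 0 < 1 - u ξ := hWpos ξ
        have hWε : 1 - u ξ ≤ ε0 := hWsmall ξ hξ
        have hζval : ζ ξ = (1 - u ξ) ^ σ := by simp only [Pi.sub_apply] at hψ0; linarith
        have hmbound : -(deriv u ξ) ≤ C3 * (1 - u ξ) ^ γ' := by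
          rw [hform, hC3def]
          exact my_rpow_div_le hW (le_of_lt hζp) (S.hDpos _ hmem) (by linarith)
            (le_of_eq hζval) (hDb' ξ hξ).1 hpr hrel1
        have hwd : HasDerivAt (fun x => (1 - u x) ^ σ)
            (-(deriv u ξ) * σ * (1 - u ξ) ^ (σ - 1)) ξ :=
          ((hudiff ξ hmem).const_sub 1).rpow_const (Or.inl (ne_of_gt hW))
        have hder := (hζd ξ hmem).sub hwd
        refine ⟨g (u ξ) - (c + h (u ξ)) * (-(deriv u ξ))
          - (-(deriv u ξ)) * σ * (1 - u ξ) ^ (σ - 1), ?_, hder.congr_deriv (by ring)⟩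
        -- positivity
        have hsplit : (1 - u ξ) ^ γ' = (1 - u ξ) ^ γ * (1 - u ξ) ^ (γ' - γ) := by
          rw [← Real.rpow_add hW]
          congr 1
          ring
        rw [hsplit] at hmbound
        have hf8 : K * (C3 * ((1 - u ξ) ^ γ * (1 - u ξ) ^ (γ' - γ)))
            + (C3 * ((1 - u ξ) ^ γ * (1 - u ξ) ^ (γ' - γ))) * σ
            < M / 2 * (1 - u ξ) ^ γ := by
          have hd3 : (1 - u ξ) ^ (γ' - γ) < M/2/((K + σ)*C3) :=
            hε₁p _ hW (le_trans hWε hε0₁)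
          have hks := my_key_small (Kp := K + σ) (C3 := C3)
            (Wγ := (1 - u ξ) ^ γ) (Wd := (1 - u ξ) ^ (γ' - γ)) (Mc := M/2)
            (by linarith) hC3 (Real.rpow_pos_of_pos hW γ) (by
              have : M/2/((K + σ)*C3) = M/2/((K + σ)*C3) := rfl
              exact hd3)
          calc K * (C3 * ((1 - u ξ) ^ γ * (1 - u ξ) ^ (γ' - γ)))
              + (C3 * ((1 - u ξ) ^ γ * (1 - u ξ) ^ (γ' - γ))) * σ
              = (K + σ) * (C3 * ((1 - u ξ) ^ γ * (1 - u ξ) ^ (γ' - γ))) := by ring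
          _ < M / 2 * (1 - u ξ) ^ γ := hks
        exact my_arith1 (hgb' ξ hξ).1 hmbound (by linarith) (hKb _ (hu.mem ξ)) hK.le
          (Real.rpow_le_one hW.le (by linarith [hWε, hε0one]) (by linarith))
          (Real.rpow_nonneg hW.le _) hσpos.le (by positivity) hf8
      · -- seeds
        intro ξ₁ hξ₁
        by_contra hcon
        push_neg at hcon
        set F : ℝ → ℝ := fun x => ζ x - c6 * (1 - u x) ^ γ' with hFdef
        have hFc : Continuous F := hζc.sub (continuous_const.mul (hwcont γ' hγ'0))
        have hFmono : MonotoneOn F (Iic ξ₁) := by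
          apply my_mono_Iic hFc.continuousOn
          intro x hx
          have hxA : x ≤ ξA := le_trans hx.le hξ₁
          have hmem := hmem' x hxA
          obtain ⟨hd, hform⟩ := hformula x hxA
          have hW : 0 < 1 - u x := hWpos x
          have hWε : 1 - u x ≤ ε0 := hWsmall x hxA
          have hle : ζ x ≤ (1 - u x) ^ σ := le_of_lt (by have := hcon x hx.le; simp only [Pi.sub_apply] at this; linarith)
          have hmbound : -(deriv u x) ≤ C3 * (1 - u x) ^ γ' := by
            rw [hform, hC3def]
            exact my_rpow_div_le hW (le_of_lt (stepA x hxA)) (S.hDpos _ hmem) (by linarith)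
              hle (hDb' x hxA).1 hpr hrel1
          have hwd : HasDerivAt (fun y => (1 - u y) ^ γ')
              (-(deriv u x) * γ' * (1 - u x) ^ (γ' - 1)) x :=
            ((hudiff x hmem).const_sub 1).rpow_const (Or.inl (ne_of_gt hW))
          have hder := (hζd x hmem).sub (hwd.const_mul c6)
          refine ⟨g (u x) - (c + h (u x)) * (-(deriv u x))
            - c6 * ((-(deriv u x)) * γ' * (1 - u x) ^ (γ' - 1)), ?_,
            hder.congr_deriv (by ring)⟩
          -- nonnegativity via arith2
          have he5 : K * (C3 * (1 - u x) ^ γ') ≤ M / 8 * (1 - u x) ^ γ := by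
            have hsplit : (1 - u x) ^ γ' = (1 - u x) ^ γ * (1 - u x) ^ (γ' - γ) := by
              rw [← Real.rpow_add hW]; congr 1; ring
            rw [hsplit]
            have hd3 : (1 - u x) ^ (γ' - γ) < M/8/(K*C3) :=
              hε₂p _ hW (le_trans hWε hε0₂)
            exact (my_key_small hK hC3 (Real.rpow_pos_of_pos hW γ) hd3).le
          have he6 : c6 * ((C3 * (1 - u x) ^ γ') * γ' * (1 - u x) ^ (γ' - 1))
              = M / 8 * (1 - u x) ^ γ := by
            have i1 : c6 * γ' * C3 = M/8 := by
              rw [hc6def]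
              field_simp
            have i2 : (1 - u x) ^ γ' * (1 - u x) ^ (γ' - 1) = (1 - u x) ^ γ := by
              rw [← Real.rpow_add hW]
              congr 1
              rw [hγ'def]; ring
            calc c6 * ((C3 * (1 - u x) ^ γ') * γ' * (1 - u x) ^ (γ' - 1))
                = (c6 * γ' * C3) * ((1 - u x) ^ γ' * (1 - u x) ^ (γ' - 1)) := by ring
            _ = M / 8 * (1 - u x) ^ γ := by rw [i1, i2]
          exact my_arith2 (hgb' x hxA).1 hmbound (by linarith) (hKb _ (hu.mem x)) hK.le
            hγ'0.le hc6.le (Real.rpow_nonneg hW.le _)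
            (mul_nonneg hM.le (Real.rpow_nonneg hW.le _)) he5 (le_of_eq he6)
        have hFlim : Tendsto F atBot (𝓝 0) := by
          have h2 := hζ0.sub ((hwpow0 γ' hγ'0).const_mul c6)
          simpa using h2
        have hF1 : (0:ℝ) ≤ F ξ₁ := my_le_of_mono_tendsto hFmono hFlim
        have hζ1 : c6 * (1 - u ξ₁) ^ γ' ≤ ζ ξ₁ := by
          simp only [hFdef] at hF1
          linarith
        have hW1 : 0 < 1 - u ξ₁ := hWpos ξ₁
        have hsplit : (1 - u ξ₁) ^ σ = (1 - u ξ₁) ^ γ' * (1 - u ξ₁) ^ (σ - γ') := by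
          rw [← Real.rpow_add hW1]; congr 1; ring
        have hWd3 : (1 - u ξ₁) ^ (σ - γ') < c6 :=
          hε₃p _ hW1 (le_trans (hWsmall ξ₁ hξ₁) hε0₃)
        have hcon1 := hcon ξ₁ le_rfl
        simp only [Pi.sub_apply] at hcon1
        have hγ'pos : 0 < (1 - u ξ₁) ^ γ' := Real.rpow_pos_of_pos hW1 γ'
        linarith only [hζ1, hcon1, hsplit, mul_lt_mul_of_pos_left hWd3 hγ'pos]
    have stepB : ∀ ξ ≤ ξA, (1 - u ξ) ^ σ ≤ ζ ξ := fun ξ hξ => by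
      have := stepBpos ξ hξ; linarith
    -- STEP C : contradiction
    set Φ : ℝ → ℝ := fun x => (1 - u x) ^ (1 - γ') - bC * x with hΦdef
    have hΦc : Continuous Φ :=
      (hwcont (1 - γ') (by linarith)).sub (continuous_const.mul continuous_id)
    have hΦmono : MonotoneOn Φ (Iic ξA) := by
      apply my_mono_Iic hΦc.continuousOn
      intro x hx
      have hmem := hmem' x hx.le
      obtain ⟨hd, hform⟩ := hformula x hx.le
      have hW : 0 < 1 - u x := hWpos x
      have hlow : C7 * (1 - u x) ^ γ' ≤ -(deriv u x) := by
        rw [hform, hC7def]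
        exact my_le_rpow_div hW (S.hDpos _ hmem) (by linarith)
          (stepB x hx.le) (hDb' x hx.le).2 hpr hrel1
      have hwd : HasDerivAt (fun y => (1 - u y) ^ (1 - γ'))
          (-(deriv u x) * (1 - γ') * (1 - u x) ^ (1 - γ' - 1)) x :=
        ((hudiff x hmem).const_sub 1).rpow_const (Or.inl (ne_of_gt hW))
      have hder := hwd.sub ((hasDerivAt_id x).const_mul bC)
      refine ⟨-(deriv u x) * (1 - γ') * (1 - u x) ^ (1 - γ' - 1) - bC, ?_,
        hder.congr_deriv (by ring)⟩
      have hWid : (1 - u x) ^ γ' * (1 - u x) ^ (1 - γ' - 1) = 1 := by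
        rw [← Real.rpow_add hW, show γ' + (1 - γ' - 1) = 0 by ring, Real.rpow_zero]
      have hWnn : (0:ℝ) ≤ (1 - γ') * (1 - u x) ^ (1 - γ' - 1) :=
        mul_nonneg (by linarith) (Real.rpow_nonneg hW.le _)
      have h3 := mul_le_mul_of_nonneg_right hlow hWnn
      have h2 : C7 * (1 - u x) ^ γ' * ((1 - γ') * (1 - u x) ^ (1 - γ' - 1)) = bC := by
        calc C7 * (1 - u x) ^ γ' * ((1 - γ') * (1 - u x) ^ (1 - γ' - 1))
            = (1 - γ') * C7 * ((1 - u x) ^ γ' * (1 - u x) ^ (1 - γ' - 1)) := by ring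
        _ = bC := by rw [hWid, hbCdef]; ring
      linarith only [h3, h2]
    have hΦb : ∀ x ≤ ξA, Φ x ≤ Φ ξA :=
      fun x hx => hΦmono (mem_Iic.2 hx) (mem_Iic.2 le_rfl) hx
    set x0 : ℝ := ξA - ((1 - u ξA) ^ (1 - γ') + 1)/bC with hx0def
    have hquot : 0 < ((1 - u ξA) ^ (1 - γ') + 1)/bC := by
      apply div_pos _ hbC
      have := Real.rpow_nonneg (hWpos ξA).le (1 - γ')
      linarith
    have h4 := hΦb x0 (by rw [hx0def]; linarith)
    have h5 : bC * (ξA - x0) = (1 - u ξA) ^ (1 - γ') + 1 := by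
      rw [hx0def]
      field_simp
      ring
    have h6 : 0 ≤ (1 - u x0) ^ (1 - γ') := Real.rpow_nonneg (hWpos x0).le _
    simp only [hΦdef] at h4
    linarith only [h4, h5, h6]

  · -- 1 ≤ γ : u < 1 everywhere
    intro hγ1 ξ₀
    by_contra hcon
    push_neg at hcon
    have huξ0 : u ξ₀ = 1 := le_antisymm (hu.mem ξ₀).2 hcon
    set Sset : Set ℝ := {x | u x = 1} with hSsetdef
    have hSne : Sset.Nonempty := ⟨ξ₀, huξ0⟩
    have hSclosed : IsClosed Sset := isClosed_eq hu.cont continuous_const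
    have hSbdd : BddAbove Sset := by
      obtain ⟨N, hN⟩ := eventually_atTop.1
        (hu.lim_top.eventually (eventually_lt_nhds one_pos))
      refine ⟨N, fun s hs => ?_⟩
      by_contra hNs
      push_neg at hNs
      have := hN s hNs.le
      rw [show u s = 1 from hs] at this
      linarith
    set ξs : ℝ := sSup Sset with hξsdef
    have hξsmem : ξs ∈ Sset := hSclosed.csSup_mem hSne hSbdd
    have huξs : u ξs = 1 := hξsmem
    have hlt1 : ∀ x, ξs < x → u x < 1 := by
      intro x hx
      refine lt_of_le_of_ne (hu.mem x).2 (fun he => ?_)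
      exact absurd (le_csSup hSbdd (he : u x = 1)) (not_le.2 hx)
    set η2 : ℝ := max ηg (1/2 : ℝ) with hη2def
    have hη21 : η2 < 1 := max_lt hηg1 (by norm_num)
    have hev2 : ∀ᶠ x in 𝓝 ξs, η2 < u x :=
      hu.cont.continuousAt.eventually (eventually_gt_nhds (by rw [huξs] at *; exact hη21))
    obtain ⟨δ', hδ', hball⟩ := Metric.eventually_nhds_iff.1 hev2
    set δ : ℝ := min (δ'/2) (c/(8*M)) with hδdef
    have hδpos : 0 < δ := lt_min (by linarith) (by positivity)
    have hδM : δ ≤ c/(8*M) := min_le_right _ _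
    have hregion : ∀ x ∈ Icc ξs (ξs + δ), η2 < u x := by
      intro x hx
      apply hball
      rw [Real.dist_eq, abs_of_nonneg (by linarith [hx.1] : (0:ℝ) ≤ x - ξs)]
      have := hx.2
      have hδ2 : δ ≤ δ'/2 := min_le_left _ _
      linarith
    obtain ⟨ξ₁, hξ₁mem, hξ₁min'⟩ := isCompact_Icc.exists_isMinOn
      (⟨ξs, le_rfl, by linarith⟩ : (Icc ξs (ξs + δ)).Nonempty) hu.cont.continuousOn
    have hmin : ∀ x ∈ Icc ξs (ξs + δ), u ξ₁ ≤ u x := fun x hx => hξ₁min' hx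
    have hend : u (ξs + δ) < 1 := hlt1 _ (by linarith)
    have humin1 : u ξ₁ < 1 := lt_of_le_of_lt (hmin _ ⟨by linarith, le_rfl⟩) hend
    have hξ₁gt : ξs < ξ₁ := by
      rcases lt_or_eq_of_le hξ₁mem.1 with hlt | heq
      · exact hlt
      · exfalso; rw [← heq, huξs] at humin1; linarith
    have hmemIoo : ∀ x, ξs < x → x ≤ ξs + δ → u x ∈ Ioo (0:ℝ) 1 := by
      intro x hx1 hx2
      refine ⟨?_, hlt1 x hx1⟩
      have := hregion x ⟨hx1.le, hx2⟩
      have : (1:ℝ)/2 ≤ η2 := le_max_right _ _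
      linarith [hregion x ⟨hx1.le, hx2⟩]
    have hmem₁ : u ξ₁ ∈ Ioo (0:ℝ) 1 := hmemIoo ξ₁ hξ₁gt hξ₁mem.2
    -- the conserved quantity
    have hgu : Continuous fun s => g (u s) := S.hgc.comp_continuous hu.cont hu.mem
    set I : ℝ → ℝ := fun y => ∫ s in ξs..y, g (u s) with hIdef
    have hI : ∀ x, HasDerivAt I (g (u x)) x := fun x =>
      intervalIntegral.integral_hasDerivAt_right (hgu.intervalIntegrable _ _)
        (hgu.stronglyMeasurableAtFilter _ _) hgu.continuousAt
    set G : ℝ → ℝ := fun x => q x + (c * u x + H (u x) + I x) with hGdef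
    have hHuc : Continuous fun x => H (u x) :=
      S.hH.continuousOn.comp_continuous hu.cont hu.mem
    have hIc : Continuous I :=
      continuous_iff_continuousAt.2 fun x => (hI x).differentiableAt.continuousAt
    have hGcont : Continuous G :=
      hqc.add (((continuous_const.mul hu.cont).add hHuc).add hIc)
    have hGconst : G ξ₁ = G ξs := by
      apply my_const_of_deriv_zero hξ₁gt hGcont.continuousOn
      intro x hx
      have hmemx : u x ∈ Ioo (0:ℝ) 1 := hmemIoo x hx.1 (le_trans hx.2.le hξ₁mem.2)
      have hud := hudiff x hmemx
      have d1 := hqd x hmemx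
      have d2 : HasDerivAt (fun y => c * u y) (c * deriv u x) x := hud.const_mul c
      have d3 : HasDerivAt (fun y => H (u y)) (h (u x) * deriv u x) x := by
        have hH1 : HasDerivAt H (h (u x)) (u x) :=
          (S.hHd (u x) (hu.mem x)).hasDerivAt (Icc_mem_nhds hmemx.1 hmemx.2)
        exact hH1.comp x hud
      have d4 := hI x
      have := d1.add ((d2.add d3).add d4)
      exact this.congr_deriv (by ring)
    have hGξs : G ξs = c + H 1 := by
      have hq0 : q ξs = 0 := by
        rw [hqdef]
        simp only [huξs]
        rw [if_neg (by simp)]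
      have hI0 : I ξs = 0 := intervalIntegral.integral_same
      simp only [hGdef, hq0, hI0, huξs]
      ring
    set w₁ : ℝ := 1 - u ξ₁ with hw₁def
    have hw₁pos : 0 < w₁ := by simp only [hw₁def]; linarith
    -- integral bound
    have hptwise : ∀ x ∈ Icc ξs ξ₁, g (u x) ≤ 2 * M * w₁ := by
      intro x hx
      rcases eq_or_lt_of_le (hu.mem x).2 with heq | hlt
      · rw [heq, S.hg1]; positivity
      · have hx2 : x ∈ Icc ξs (ξs + δ) := ⟨hx.1, le_trans hx.2 hξ₁mem.2⟩
        have hη2x : η2 < u x := hregion x hx2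
        have hgbx := (hgb (u x) (lt_of_le_of_lt (le_max_left _ _) hη2x) hlt).2
        have h0 : 0 < 1 - u x := by linarith
        have h3 : (1 - u x) ^ γ ≤ 1 - u x := by
          calc (1 - u x) ^ γ ≤ (1 - u x) ^ (1:ℝ) :=
                Real.rpow_le_rpow_of_exponent_ge h0 (by linarith [(hu.mem x).1]) hγ1
          _ = 1 - u x := Real.rpow_one _
        have h4 : 1 - u x ≤ w₁ := by
          have := hmin x hx2
          simp only [hw₁def]; linarith
        have h5 : 2 * M * ((1 - u x) ^ γ) ≤ 2 * M * w₁ :=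
          mul_le_mul_of_nonneg_left (le_trans h3 h4) (by positivity)
        linarith only [hgbx, h5]
    have hIbound : I ξ₁ ≤ (ξ₁ - ξs) * (2 * M * w₁) := by
      have hconst : IntervalIntegrable (fun _ : ℝ => 2 * M * w₁)
          MeasureTheory.volume ξs ξ₁ := intervalIntegrable_const
      have := intervalIntegral.integral_mono_on hξ₁gt.le (hgu.intervalIntegrable _ _)
        hconst hptwise
      calc I ξ₁ ≤ ∫ _ in ξs..ξ₁, 2 * M * w₁ := this
      _ = (ξ₁ - ξs) * (2 * M * w₁) := by
          rw [intervalIntegral.integral_const]; simp [smul_eq_mul]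
    have hIb2 : I ξ₁ ≤ c * w₁ / 4 := by
      have h1' : ξ₁ - ξs ≤ δ := by linarith [hξ₁mem.2]
      have h2 : (ξ₁ - ξs) * (2 * M * w₁) ≤ (c/(8*M)) * (2 * M * w₁) := by
        apply mul_le_mul_of_nonneg_right (le_trans h1' hδM) (by positivity)
      have hM' : M ≠ 0 := ne_of_gt hM
      have h3 : (c/(8*M)) * (2 * M * w₁) = c * w₁ / 4 := by field_simp; ring
      exact le_trans hIbound (le_trans h2 (le_of_eq h3))
    have hHle : H (u ξ₁) ≤ H 1 :=
      hHmono (hu.mem ξ₁) ⟨zero_le_one, le_rfl⟩ (hu.mem ξ₁).2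
    have hqξ₁ : 0 < q ξ₁ := by
      have : q ξ₁ = c + H 1 - (c * u ξ₁ + H (u ξ₁) + I ξ₁) := by
        have := hGconst.symm
        rw [hGξs] at this
        simp only [hGdef] at this
        linarith
      rw [this]
      have hcu : c * u ξ₁ = c - c * w₁ := by simp only [hw₁def]; ring
      linarith only [hIb2, hHle, hcu, mul_pos hc hw₁pos]
    -- positive flux at an interior minimum: contradiction
    have hdpos : 0 < deriv u ξ₁ := by
      apply my_sign_pos (S.hDpos _ hmem₁)
      rw [hqeq ξ₁ hmem₁] at hqξ₁
      exact hqξ₁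
    have hud := hudiff ξ₁ hmem₁
    have hslope := hasDerivAt_iff_tendsto_slope.1 hud
    have hev : ∀ᶠ s in 𝓝[<] ξ₁, 0 < slope u ξ₁ s :=
      (hslope.eventually (eventually_gt_nhds hdpos)).filter_mono
        (nhdsWithin_mono _ fun s hs => ne_of_lt hs)
    haveI hnb : (𝓝[Ioo ξs ξ₁] ξ₁).NeBot := by
      rw [← mem_closure_iff_nhdsWithin_neBot, closure_Ioo hξ₁gt.ne]
      exact ⟨hξ₁gt.le, le_rfl⟩
    have hev' : ∀ᶠ s in 𝓝[Ioo ξs ξ₁] ξ₁, 0 < slope u ξ₁ s :=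
      hev.filter_mono (nhdsWithin_mono _ (fun s hs => hs.2))
    obtain ⟨s, hs1, hs2⟩ := (hev'.and eventually_mem_nhdsWithin).exists
    rw [slope_def_field] at hs1
    have hneg : s - ξ₁ < 0 := sub_neg.2 hs2.2
    have husneg : u s - u ξ₁ < 0 := by
      rcases div_pos_iff.1 hs1 with hcase | hcase
      · linarith [hcase.2]
      · exact hcase.1
    have := hmin s ⟨hs2.1.le, le_trans hs2.2.le hξ₁mem.2⟩
    linarith
end

section
/- Assume h ≥ 0 on [0,1]. Let u be a solution of the traveling-wave problem with speed c > 0, and suppose there exist α ∈ ℝ and a positive finite limit lim_{v→0+} D(v)/v^α. Then u attains the value 0 at some finite point (i.e., there exists ξ ∈ ℝ with u(ξ) = 0) if and only if p + α > 2. Equivalently, the integral ∫₀^θ D(s)^{p'−1}/(c·s + H(s))^{p'−1} ds is finite if and only if p + α > 2. -/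
open Set MeasureTheory Filter

/-- Pointwise algebra: solve `D * (|w|^(p-2) * w) = -M` for `w`. -/
lemma tw_solve_w {p Dv Mv w : ℝ} (hp : 1 < p) (hD : 0 < Dv) (hM : 0 < Mv)
    (heq : Dv * (|w| ^ (p - 2) * w) = -Mv) :
    w = -((Mv / Dv) ^ (p - 1)⁻¹) := by
  have hp1 : (0:ℝ) < p - 1 := by linarith
  have hw : w < 0 := by
    rcases lt_trichotomy w 0 with h | h | h
    · exact h
    · rw [h] at heq; simp at heq; linarith
    · exfalso
      have h1 : 0 < |w| ^ (p - 2) := Real.rpow_pos_of_pos (abs_pos.2 h.ne') _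
      nlinarith [mul_pos hD (mul_pos h1 h)]
  have habs : |w| = -w := abs_of_neg hw
  have h0 : (0:ℝ) < |w| := abs_pos.2 hw.ne
  have hkey : |w| ^ (p - 1) = Mv / Dv := by
    have h2 : |w| ^ (p - 2) * w = -(|w| ^ (p - 1)) := by
      have : |w| ^ (p - 1) = |w| ^ (p - 2) * |w| := by
        rw [← Real.rpow_add_one h0.ne' (p - 2)]; ring_nf
      rw [this, habs]; ring
    rw [h2] at heq
    field_simp at heq ⊢
    linarith
  have : (|w| ^ (p - 1)) ^ (p - 1)⁻¹ = |w| := by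
    rw [← Real.rpow_mul (abs_nonneg w), mul_inv_cancel₀ hp1.ne', Real.rpow_one]
  rw [← hkey, this, habs, neg_neg]
section Facts
variable {p θ : ℝ} {D H h g : ℝ → ℝ}

lemma CombSetup.pconj_sub_one (S : CombSetup p θ D H h g) : pconj p - 1 = (p - 1)⁻¹ := by
  have hp1 : p - 1 ≠ 0 := by have := S.hp; intro h; linarith [sub_eq_zero.1 h]
  unfold pconj; field_simp; ring

lemma CombSetup.H_nonneg (S : CombSetup p θ D H h g)
    (hh0 : ∀ v ∈ Icc (0:ℝ) 1, 0 ≤ h v) : ∀ v ∈ Icc (0:ℝ) 1, 0 ≤ H v := by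
  have hmono : MonotoneOn H (Icc 0 1) := by
    apply monotoneOn_of_deriv_nonneg (convex_Icc 0 1) (S.hH.continuousOn)
    · intro x hx
      rw [interior_Icc] at hx
      exact ((S.hHd x (Ioo_subset_Icc_self hx)).hasDerivAt
        (Icc_mem_nhds hx.1 hx.2)).differentiableAt.differentiableWithinAt
    · intro x hx
      rw [interior_Icc] at hx
      rw [((S.hHd x (Ioo_subset_Icc_self hx)).hasDerivAt (Icc_mem_nhds hx.1 hx.2)).deriv]
      exact hh0 x (Ioo_subset_Icc_self hx)
  intro v hv
  have := hmono (left_mem_Icc.2 zero_le_one) hv hv.1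
  rwa [S.hH0] at this

lemma CombSetup.M_pos (S : CombSetup p θ D H h g) {c : ℝ} (hc : 0 < c)
    (hh0 : ∀ v ∈ Icc (0:ℝ) 1, 0 ≤ h v) :
    ∀ v ∈ Ioc (0:ℝ) 1, 0 < c * v + H v := fun v hv =>
  add_pos_of_pos_of_nonneg (mul_pos hc hv.1) (S.H_nonneg hh0 v ⟨hv.1.le, hv.2⟩)

/-- Continuity of the integrand `f` on `(0, θ]`. -/
lemma CombSetup.f_cont (S : CombSetup p θ D H h g) {c : ℝ} (hc : 0 < c)
    (hh0 : ∀ v ∈ Icc (0:ℝ) 1, 0 ≤ h v) :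
    ContinuousOn (fun s => D s ^ (pconj p - 1) / (c * s + H s) ^ (pconj p - 1))
      (Ioc 0 θ) := by
  have hsub : Ioc (0:ℝ) θ ⊆ Ioo 0 1 := fun s hs => ⟨hs.1, lt_of_le_of_lt hs.2 S.hθ1⟩
  have hsub' : Ioc (0:ℝ) θ ⊆ Icc 0 1 := fun s hs => ⟨hs.1.le, hs.2.trans S.hθ1.le⟩
  have hM : ContinuousOn (fun s => c * s + H s) (Ioc 0 θ) :=
    ((continuous_const.mul continuous_id).continuousOn).add (S.hH.continuousOn.mono hsub')
  refine ContinuousOn.div ?_ ?_ ?_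
  · exact (S.hD.continuousOn.mono hsub).rpow_const
      (fun s hs => Or.inl (S.hDpos s (hsub hs)).ne')
  · exact hM.rpow_const (fun s hs =>
      Or.inl (S.M_pos hc hh0 s ⟨hs.1, hs.2.trans S.hθ1.le⟩).ne')
  · exact fun s hs =>
      (Real.rpow_pos_of_pos (S.M_pos hc hh0 s ⟨hs.1, hs.2.trans S.hθ1.le⟩) _).ne'

lemma CombSetup.f_pos (S : CombSetup p θ D H h g) {c : ℝ} (hc : 0 < c)
    (hh0 : ∀ v ∈ Icc (0:ℝ) 1, 0 ≤ h v) :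
    ∀ s ∈ Ioc (0:ℝ) θ, 0 < D s ^ (pconj p - 1) / (c * s + H s) ^ (pconj p - 1) :=
  fun s hs => div_pos
    (Real.rpow_pos_of_pos (S.hDpos s ⟨hs.1, lt_of_le_of_lt hs.2 S.hθ1⟩) _)
    (Real.rpow_pos_of_pos (S.M_pos hc hh0 s ⟨hs.1, hs.2.trans S.hθ1.le⟩) _)

end Facts

/-- If `f/g` has a (finite, nonneg) limit at `0⁺` and `g` is integrable near `0`,
then `f` is integrable on `(0,θ)`. -/
lemma integrableOn_of_ratio_le {f g : ℝ → ℝ} {θ ℓ : ℝ} (hθ : 0 < θ)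
    (hf : ContinuousOn f (Ioc 0 θ)) (hg : ContinuousOn g (Ioc 0 θ))
    (hfnn : ∀ s ∈ Ioo (0:ℝ) θ, 0 ≤ f s) (hgpos : ∀ s ∈ Ioo (0:ℝ) θ, 0 < g s)
    (hℓ : 0 ≤ ℓ)
    (hlim : Tendsto (fun s => f s / g s) (nhdsWithin 0 (Ioo 0 θ)) (nhds ℓ))
    (hIg : IntegrableOn g (Ioo 0 θ)) : IntegrableOn f (Ioo 0 θ) := by
  have hev : ∀ᶠ s in nhdsWithin 0 (Ioo 0 θ), f s / g s < ℓ + 1 :=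
    hlim.eventually_lt_const (by linarith)
  rw [eventually_nhdsWithin_iff, Metric.eventually_nhds_iff] at hev
  obtain ⟨ε, hε, hevb⟩ := hev
  set δ := min ε θ with hδdef
  have hδ : 0 < δ := lt_min hε hθ
  have hbound : ∀ s ∈ Ioo (0:ℝ) δ, f s ≤ (ℓ + 1) * g s := by
    intro s hs
    have hsθ : s ∈ Ioo (0:ℝ) θ := ⟨hs.1, lt_of_lt_of_le hs.2 (min_le_right _ _)⟩
    have h1 : f s / g s < ℓ + 1 := by
      apply hevb _ hsθ
      rw [Real.dist_eq, sub_zero, abs_of_pos hs.1]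
      exact lt_of_lt_of_le hs.2 (min_le_left _ _)
    exact (div_lt_iff₀ (hgpos s hsθ)).1 h1 |>.le
  have h1 : IntegrableOn f (Ioo 0 δ) := by
    have hgint : IntegrableOn (fun s => (ℓ + 1) * g s) (Ioo 0 δ) :=
      (hIg.mono_set (Ioo_subset_Ioo le_rfl (min_le_right _ _))).const_mul _
    refine Integrable.mono' hgint ?_ ?_
    · exact (hf.mono (fun s hs => ⟨hs.1, le_trans hs.2.le (min_le_right _ _)⟩)).aestronglyMeasurable
        measurableSet_Ioo
    · refine (ae_restrict_iff' measurableSet_Ioo).2 (ae_of_all _ fun s hs => ?_)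
      have hsθ : s ∈ Ioo (0:ℝ) θ := ⟨hs.1, lt_of_lt_of_le hs.2 (min_le_right _ _)⟩
      rw [Real.norm_eq_abs, abs_of_nonneg (hfnn s hsθ)]
      exact hbound s hs
  have h2 : IntegrableOn f (Icc δ θ) :=
    (hf.mono (fun s hs => ⟨lt_of_lt_of_le hδ hs.1, hs.2⟩)).integrableOn_compact isCompact_Icc
  refine (h1.union h2).mono_set fun s hs => ?_
  rcases lt_or_ge s δ with h | h
  · exact Or.inl ⟨hs.1, h⟩
  · exact Or.inr ⟨h, hs.2.le⟩
lemma ratio_eq {Dv M s α q : ℝ} (hs0 : 0 < s) (hD0 : 0 < Dv) (hM0 : 0 < M) :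
    ((Dv / s ^ α) * (s / M)) ^ q = (Dv ^ q / M ^ q) / s ^ ((α - 1) * q) := by
  have hsα : (0:ℝ) < s ^ α := Real.rpow_pos_of_pos hs0 _
  rw [Real.mul_rpow (div_nonneg hD0.le hsα.le) (div_nonneg hs0.le hM0.le),
      Real.div_rpow hD0.le hsα.le, Real.div_rpow hs0.le hM0.le,
      ← Real.rpow_mul hs0.le,
      show (α - 1) * q = α * q - q by ring, Real.rpow_sub hs0]
  have h1 : s ^ (α * q) ≠ 0 := (Real.rpow_pos_of_pos hs0 _).ne'
  have h2 : s ^ q ≠ 0 := (Real.rpow_pos_of_pos hs0 _).ne'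
  have h3 : M ^ q ≠ 0 := (Real.rpow_pos_of_pos hM0 _).ne'
  field_simp
lemma part2 (p θ c α : ℝ) (D H h g : ℝ → ℝ) (S : CombSetup p θ D H h g)
    (hh0 : ∀ v ∈ Icc (0:ℝ) 1, 0 ≤ h v) (hc : 0 < c)
    (hDlim : ∃ L > (0:ℝ),
      Tendsto (fun v => D v / v ^ α) (nhdsWithin 0 (Ioi (0:ℝ))) (nhds L)) :
    IntegrableOn (fun s => D s ^ (pconj p - 1) / (c * s + H s) ^ (pconj p - 1)) (Ioo 0 θ)
      ↔ 2 < p + α := by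
  obtain ⟨L, hL, hDl⟩ := hDlim
  have hp1 : (0:ℝ) < p - 1 := by linarith [S.hp]
  set q : ℝ := pconj p - 1 with hqdef
  have hq : q = (p - 1)⁻¹ := S.pconj_sub_one
  have hqpos : 0 < q := by rw [hq]; positivity
  set r : ℝ := (α - 1) * q with hrdef
  set f : ℝ → ℝ := fun s => D s ^ q / (c * s + H s) ^ q with hfdef
  have hriff : (-1 < r) ↔ (2 < p + α) := by
    rw [hrdef, hq, ← div_eq_mul_inv, lt_div_iff₀ hp1]
    constructor <;> intro <;> nlinarith
  -- the slope limit for H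
  have hsub1 : Ioo (0:ℝ) θ ⊆ Icc 0 1 \ {0} := fun s hs =>
    ⟨⟨hs.1.le, (hs.2.trans S.hθ1).le⟩, hs.1.ne'⟩
  have hHs : Tendsto (fun s => H s / s) (nhdsWithin 0 (Ioo 0 θ)) (nhds (h 0)) := by
    have h1 := S.hHd 0 (left_mem_Icc.2 zero_le_one)
    rw [hasDerivWithinAt_iff_tendsto_slope] at h1
    have h2 : Tendsto (slope H 0) (nhdsWithin 0 (Ioo 0 θ)) (nhds (h 0)) :=
      h1.mono_left (nhdsWithin_mono 0 hsub1)
    refine h2.congr' ?_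
    filter_upwards [self_mem_nhdsWithin] with s _
    rw [slope_def_field, S.hH0]; ring
  have hch0 : (0:ℝ) < c + h 0 := by
    have := hh0 0 (left_mem_Icc.2 zero_le_one); linarith
  have hMs : Tendsto (fun s => s / (c * s + H s)) (nhdsWithin 0 (Ioo 0 θ))
      (nhds (c + h 0)⁻¹) := by
    have h1 : Tendsto (fun s => (c * s + H s) / s) (nhdsWithin 0 (Ioo 0 θ))
        (nhds (c + h 0)) := by
      have h2 : Tendsto (fun s => c + H s / s) (nhdsWithin 0 (Ioo 0 θ)) (nhds (c + h 0)) :=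
        tendsto_const_nhds.add hHs
      refine h2.congr' ?_
      filter_upwards [self_mem_nhdsWithin] with s hs
      field_simp [hs.1.ne']
    have := h1.inv₀ hch0.ne'
    refine this.congr' ?_
    filter_upwards [self_mem_nhdsWithin] with s _
    rw [inv_div]
  have hDl' : Tendsto (fun v => D v / v ^ α) (nhdsWithin 0 (Ioo 0 θ)) (nhds L) :=
    hDl.mono_left (nhdsWithin_mono 0 (fun s hs => hs.1))
  have hφ : Tendsto (fun s => (D s / s ^ α) * (s / (c * s + H s)))
      (nhdsWithin 0 (Ioo 0 θ)) (nhds (L * (c + h 0)⁻¹)) := hDl'.mul hMs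
  have hℓpos : 0 < (L * (c + h 0)⁻¹) ^ q := by positivity
  have hMpos : ∀ s ∈ Ioo (0:ℝ) θ, 0 < c * s + H s := fun s hs =>
    S.M_pos hc hh0 s ⟨hs.1, (hs.2.trans S.hθ1).le⟩
  have e1 : ∀ s ∈ Ioo (0:ℝ) θ,
      ((D s / s ^ α) * (s / (c * s + H s))) ^ q = f s / s ^ r := by
    intro s hs
    have hs0 : 0 < s := hs.1
    have hD0 : 0 < D s := S.hDpos s ⟨hs.1, hs.2.trans S.hθ1⟩
    have hM0 : 0 < c * s + H s := hMpos s hs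
    have hsα : 0 < s ^ α := Real.rpow_pos_of_pos hs0 _
    simp only [hfdef, hrdef]
    exact ratio_eq hs0 hD0 hM0
  have hρ : Tendsto (fun s => f s / s ^ r) (nhdsWithin 0 (Ioo 0 θ))
      (nhds ((L * (c + h 0)⁻¹) ^ q)) := by
    refine (hφ.rpow_const (Or.inr hqpos.le)).congr' ?_
    filter_upwards [self_mem_nhdsWithin] with s hs
    exact e1 s hs
  have hgcont : ContinuousOn (fun s : ℝ => s ^ r) (Ioc 0 θ) :=
    continuousOn_id.rpow_const (fun s hs => Or.inl hs.1.ne')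
  have hgpos : ∀ s ∈ Ioo (0:ℝ) θ, 0 < s ^ r := fun s hs => Real.rpow_pos_of_pos hs.1 _
  have hfc : ContinuousOn f (Ioc 0 θ) := S.f_cont hc hh0
  have hfpos : ∀ s ∈ Ioo (0:ℝ) θ, 0 < f s := fun s hs =>
    S.f_pos hc hh0 s ⟨hs.1, hs.2.le⟩
  have hiff : IntegrableOn f (Ioo 0 θ) ↔ IntegrableOn (fun s : ℝ => s ^ r) (Ioo 0 θ) := by
    constructor
    · intro hint
      refine integrableOn_of_ratio_le S.hθ0 hgcont hfc (fun s hs => (hgpos s hs).le)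
        hfpos (inv_nonneg.2 hℓpos.le) ?_ hint
      have := hρ.inv₀ hℓpos.ne'
      refine this.congr' ?_
      filter_upwards [self_mem_nhdsWithin] with s _
      rw [inv_div]
    · intro hint
      exact integrableOn_of_ratio_le S.hθ0 hfc hgcont (fun s hs => (hfpos s hs).le)
        hgpos hℓpos.le hρ hint
  rw [hiff, intervalIntegral.integrableOn_Ioo_rpow_iff S.hθ0, hriff]
section ODE
variable {p θ c : ℝ} {D H h g u : ℝ → ℝ}

lemma IsTWSol.openU (hu : IsTWSol p c D h g u) :
    IsOpen {ξ | u ξ ∈ Ioo (0:ℝ) 1} := isOpen_Ioo.preimage hu.cont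

lemma IsTWSol.uderiv (hu : IsTWSol p c D h g u) {ξ : ℝ} (hξ : u ξ ∈ Ioo (0:ℝ) 1) :
    HasDerivAt u (deriv u ξ) ξ := by
  have hd : DifferentiableAt ℝ u ξ :=
    ((hu.smooth.differentiableOn one_ne_zero) ξ hξ).differentiableAt (hu.openU.mem_nhds hξ)
  exact hd.hasDerivAt

/-- Derivative of the first integral `F = flux + c u + H ∘ u` vanishes where `0 < u < θ`. -/
lemma Fderiv (S : CombSetup p θ D H h g) (hu : IsTWSol p c D h g u)
    {ξ : ℝ} (hξ : u ξ ∈ Ioo (0:ℝ) θ) :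
    HasDerivAt (fun x => flux p D u x + (c * u x + H (u x))) 0 ξ := by
  have hξ1 : u ξ ∈ Ioo (0:ℝ) 1 := ⟨hξ.1, hξ.2.trans S.hθ1⟩
  have hu' : HasDerivAt u (deriv u ξ) ξ := hu.uderiv hξ1
  have hfl := hu.eqn ξ hξ1
  have hH' : HasDerivAt H (h (u ξ)) (u ξ) :=
    (S.hHd (u ξ) ⟨hξ1.1.le, hξ1.2.le⟩).hasDerivAt (Icc_mem_nhds hξ1.1 hξ1.2)
  have hcomp : HasDerivAt (fun x => H (u x)) (h (u ξ) * deriv u ξ) ξ := hH'.comp ξ hu'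
  have hg0 : g (u ξ) = 0 := S.hg0 (u ξ) ⟨hξ.1.le, hξ.2.le⟩
  have htot := hfl.add ((hu'.const_mul c).add hcomp)
  exact htot.congr_deriv (by rw [hg0]; ring)

/-- The first integral is constant on intervals where `0 < u < θ`. -/
lemma Fconst (S : CombSetup p θ D H h g) (hu : IsTWSol p c D h g u)
    {a b : ℝ} (hab : a ≤ b) (hmem : ∀ ξ ∈ Icc a b, u ξ ∈ Ioo (0:ℝ) θ) :
    flux p D u b + (c * u b + H (u b)) = flux p D u a + (c * u a + H (u a)) := by
  have := constant_of_has_deriv_right_zero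
    (f := fun x => flux p D u x + (c * u x + H (u x)))
    (fun ξ hξ => (Fderiv S hu (hmem ξ hξ)).continuousAt.continuousWithinAt)
    (fun ξ hξ => (Fderiv S hu (hmem ξ (Ico_subset_Icc_self hξ))).hasDerivWithinAt)
  exact this b (right_mem_Icc.2 hab)

/-- Key: on an interval where `0 < u < θ` and the first integral vanishes at `a`,
the profile is decreasing and time equals the integral of `f` between levels. -/
lemma key_interval (S : CombSetup p θ D H h g)
    (hh0 : ∀ v ∈ Icc (0:ℝ) 1, 0 ≤ h v) (hc : 0 < c) (hu : IsTWSol p c D h g u)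
    {a b : ℝ} (hab : a ≤ b) (hmem : ∀ ξ ∈ Icc a b, u ξ ∈ Ioo (0:ℝ) θ)
    (hF0 : flux p D u a + (c * u a + H (u a)) = 0) :
    u b ≤ u a ∧
      (∫ s in (u b)..(u a), D s ^ (pconj p - 1) / (c * s + H s) ^ (pconj p - 1)) = b - a := by
  have hp1 : (0:ℝ) < p - 1 := by linarith [S.hp]
  have hq : pconj p - 1 = (p - 1)⁻¹ := S.pconj_sub_one
  set f : ℝ → ℝ := fun s => D s ^ (pconj p - 1) / (c * s + H s) ^ (pconj p - 1) with hfdef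
  have hMpos : ∀ v ∈ Ioo (0:ℝ) θ, 0 < c * v + H v := fun v hv =>
    S.M_pos hc hh0 v ⟨hv.1, (hv.2.trans S.hθ1).le⟩
  have hDpos : ∀ v ∈ Ioo (0:ℝ) θ, 0 < D v := fun v hv =>
    S.hDpos v ⟨hv.1, hv.2.trans S.hθ1⟩
  have hfc : ContinuousOn f (Ioc 0 θ) := S.f_cont hc hh0
  -- the first integral vanishes on all of [a, b]
  have hFx : ∀ x ∈ Icc a b, flux p D u x = -(c * u x + H (u x)) := by
    intro x hx
    have h1 : flux p D u x + (c * u x + H (u x)) = 0 := by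
      rw [Fconst S hu hx.1 (fun ξ hξ => hmem ξ ⟨hξ.1, hξ.2.trans hx.2⟩)]
      exact hF0
    linarith
  -- hence an explicit formula for the derivative of u
  have hw : ∀ x ∈ Icc a b, deriv u x
      = -(((c * u x + H (u x)) / D (u x)) ^ (p - 1)⁻¹) := by
    intro x hx
    have hux := hmem x hx
    apply tw_solve_w S.hp (hDpos _ hux) (hMpos _ hux)
    have := hFx x hx
    unfold flux at this
    linarith [this]
  -- u is antitone on [a, b]
  have hanti : ∀ x ∈ Icc a b, u x ≤ u a := by
    rcases eq_or_lt_of_le hab with rfl | hlt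
    · intro x hx; rw [le_antisymm hx.1 hx.2]
    · have hA : StrictAntiOn u (Icc a b) := by
        apply strictAntiOn_of_deriv_neg (convex_Icc a b) hu.cont.continuousOn
        intro x hx
        rw [interior_Icc] at hx
        rw [hw x ⟨hx.1.le, hx.2.le⟩]
        have hux := hmem x ⟨hx.1.le, hx.2.le⟩
        have : (0:ℝ) < ((c * u x + H (u x)) / D (u x)) ^ (p - 1)⁻¹ :=
          Real.rpow_pos_of_pos (div_pos (hMpos _ hux) (hDpos _ hux)) _
        linarith
      intro x hx
      rcases eq_or_lt_of_le hx.1 with rfl | hlt2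
      · exact le_rfl
      · exact (hA (left_mem_Icc.2 hab) hx hlt2).le
  refine ⟨hanti b (right_mem_Icc.2 hab), ?_⟩
  -- the primitive P x = ∫ s in x .. u a, f s
  set P : ℝ → ℝ := fun x => ∫ s in x..(u a), f s with hPdef
  have hP : ∀ v ∈ Ioo (0:ℝ) θ, HasDerivAt P (-(f v)) v := by
    intro v hv
    apply intervalIntegral.integral_hasDerivAt_left
    · apply ContinuousOn.intervalIntegrable
      apply hfc.mono
      intro s hs
      have := (ordConnected_Ioo.uIcc_subset hv (hmem a (left_mem_Icc.2 hab))) hs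
      exact ⟨this.1, this.2.le⟩
    · exact ContinuousOn.stronglyMeasurableAtFilter isOpen_Ioo
        (hfc.mono (fun s hs => ⟨hs.1, hs.2.le⟩)) v hv
    · exact (hfc.mono (fun s hs => ⟨hs.1, hs.2.le⟩)).continuousAt (Ioo_mem_nhds hv.1 hv.2)
  -- G x = P (u x) - (x - a) has zero derivative
  have hG : ∀ x ∈ Icc a b, HasDerivAt (fun x => P (u x) - (x - a)) 0 x := by
    intro x hx
    have hux := hmem x hx
    have hu' : HasDerivAt u (deriv u x) x := hu.uderiv ⟨hux.1, hux.2.trans S.hθ1⟩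
    have hPU : HasDerivAt (fun x => P (u x)) (-(f (u x)) * deriv u x) x :=
      (hP (u x) hux).comp x hu'
    have hid : HasDerivAt (fun x : ℝ => x - a) 1 x := (hasDerivAt_id x).sub_const a
    have := hPU.sub hid
    refine this.congr_deriv ?_
    rw [hw x hx]
    have hfval : f (u x) * (((c * u x + H (u x)) / D (u x)) ^ (p - 1)⁻¹) = 1 := by
      rw [hfdef]
      simp only
      rw [Real.div_rpow (hMpos _ hux).le (hDpos _ hux).le, hq]
      have h1 : D (u x) ^ (p-1)⁻¹ ≠ 0 := (Real.rpow_pos_of_pos (hDpos _ hux) _).ne'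
      have h2 : (c * u x + H (u x)) ^ (p-1)⁻¹ ≠ 0 :=
        (Real.rpow_pos_of_pos (hMpos _ hux) _).ne'
      rw [div_mul_div_comm, mul_comm, div_self (mul_ne_zero h2 h1)]
    nlinarith [hfval]
  have hconst := constant_of_has_deriv_right_zero
    (f := fun x => P (u x) - (x - a))
    (fun x hx => (hG x hx).continuousAt.continuousWithinAt)
    (fun x hx => (hG x (Ico_subset_Icc_self hx)).hasDerivWithinAt)
  have := hconst b (right_mem_Icc.2 hab)
  simp only [sub_self, intervalIntegral.integral_same] at this
  have hPa : P (u a) = 0 := intervalIntegral.integral_same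
  rw [hPa] at this
  linarith [this]

end ODE
section Main
variable {p θ c : ℝ} {D H h g u : ℝ → ℝ}

/-- The first integral vanishes at `a` if `u` gets arbitrarily small on admissible
intervals to the right of `a`. -/
lemma Fa_zero (S : CombSetup p θ D H h g)
    (hh0 : ∀ v ∈ Icc (0:ℝ) 1, 0 ≤ h v) (hc : 0 < c) (hu : IsTWSol p c D h g u) {a : ℝ}
    (hsmall : ∀ ε > 0, ∃ b, a ≤ b ∧ (∀ ξ ∈ Icc a b, u ξ ∈ Ioo (0:ℝ) θ) ∧ u b < ε) :
    flux p D u a + (c * u a + H (u a)) = 0 := by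
  have hHnn := S.H_nonneg hh0
  have habs : ∀ ε > 0, |flux p D u a + (c * u a + H (u a))| < ε := by
    intro ε hε
    obtain ⟨δ₁, hδ₁, hfl⟩ := hu.flux_to0 (ε/3) (by linarith)
    have hHc : Tendsto H (nhdsWithin 0 (Icc 0 1)) (nhds 0) := by
      have := S.hH.continuousOn 0 (left_mem_Icc.2 zero_le_one)
      rwa [ContinuousWithinAt, S.hH0] at this
    obtain ⟨δ₂, hδ₂, hHsm⟩ := Metric.tendsto_nhdsWithin_nhds.1 hHc (ε/3) (by linarith)
    set δ₃ : ℝ := ε / (3 * (c + 1)) with hδ₃def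
    have hδ₃ : 0 < δ₃ := by positivity
    obtain ⟨b, hab, hmem, hbsmall⟩ := hsmall (min δ₁ (min δ₂ δ₃))
      (lt_min hδ₁ (lt_min hδ₂ hδ₃))
    have hub : u b ∈ Ioo (0:ℝ) θ := hmem b (right_mem_Icc.2 hab)
    have hub1 : u b ∈ Ioo (0:ℝ) 1 := ⟨hub.1, hub.2.trans S.hθ1⟩
    have hFc : flux p D u a + (c * u a + H (u a))
        = flux p D u b + (c * u b + H (u b)) := (Fconst S hu hab hmem).symm
    have h1 : |flux p D u b| < ε/3 :=
      hfl b hub1 (hbsmall.trans_le (min_le_left _ _))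
    have h2 : H (u b) < ε/3 := by
      have := hHsm ⟨hub1.1.le, hub1.2.le⟩ (by
        rw [Real.dist_eq, sub_zero, abs_of_pos hub.1]
        exact hbsmall.trans_le ((min_le_right _ _).trans (min_le_left _ _)))
      rw [Real.dist_eq, sub_zero] at this
      exact lt_of_le_of_lt (le_abs_self _) this
    have h3 : c * u b < ε/3 := by
      have hub3 : u b < δ₃ := hbsmall.trans_le ((min_le_right _ _).trans (min_le_right _ _))
      rw [hδ₃def] at hub3
      rw [show ε/3 = (c+1) * (ε / (3 * (c+1))) by field_simp]
      have : c * u b < c * (ε / (3 * (c+1))) ∨ c * u b = c * (ε / (3*(c+1))) := by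
        rcases lt_or_eq_of_le (mul_le_mul_of_nonneg_left hub3.le hc.le) with h|h
        · exact Or.inl h
        · exact Or.inr h
      calc c * u b ≤ c * (ε / (3 * (c+1))) := mul_le_mul_of_nonneg_left hub3.le hc.le
        _ < (c+1) * (ε / (3 * (c+1))) := by
            apply mul_lt_mul_of_pos_right (by linarith) (by positivity)
    have hnn : 0 ≤ c * u b + H (u b) :=
      add_nonneg (mul_nonneg hc.le hub.1.le) (hHnn _ ⟨hub1.1.le, hub1.2.le⟩)
    rw [hFc]
    calc |flux p D u b + (c * u b + H (u b))|
        ≤ |flux p D u b| + |c * u b + H (u b)| := abs_add_le _ _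
      _ = |flux p D u b| + (c * u b + H (u b)) := by rw [abs_of_nonneg hnn]
      _ < ε/3 + (ε/3 + ε/3) := by linarith
      _ = ε := by ring
  by_contra hne
  have := habs _ (abs_pos.2 hne)
  exact lt_irrefl _ this

/-- If the integral converges then `u` attains the value 0. -/
lemma attain_of_int (S : CombSetup p θ D H h g)
    (hh0 : ∀ v ∈ Icc (0:ℝ) 1, 0 ≤ h v) (hc : 0 < c) (hu : IsTWSol p c D h g u)
    (hI : IntegrableOn (fun s => D s ^ (pconj p - 1) / (c * s + H s) ^ (pconj p - 1))
      (Ioo 0 θ)) : ∃ ξ : ℝ, u ξ = 0 := by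
  by_contra hno
  push_neg at hno
  have hpos : ∀ ξ, 0 < u ξ := fun ξ => (hu.mem ξ).1.lt_of_ne (Ne.symm (hno ξ))
  obtain ⟨a, ha⟩ := eventually_atTop.1 (hu.lim_top.eventually_lt_const S.hθ0)
  have hmem : ∀ b, a ≤ b → ∀ ξ ∈ Icc a b, u ξ ∈ Ioo (0:ℝ) θ :=
    fun b _ ξ hξ => ⟨hpos ξ, ha ξ hξ.1⟩
  have hF0 : flux p D u a + (c * u a + H (u a)) = 0 := by
    apply Fa_zero S hh0 hc hu
    intro ε hε
    obtain ⟨b, hb1, hb2⟩ := ((hu.lim_top.eventually_lt_const hε).and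
      (eventually_ge_atTop a)).exists
    exact ⟨b, hb2, hmem b hb2, hb1⟩
  set f : ℝ → ℝ := fun s => D s ^ (pconj p - 1) / (c * s + H s) ^ (pconj p - 1) with hfdef
  set C : ℝ := ∫ s in Ioo (0:ℝ) θ, f s with hCdef
  have hC0 : 0 ≤ C := setIntegral_nonneg measurableSet_Ioo
    (fun s hs => (S.f_pos hc hh0 s ⟨hs.1, hs.2.le⟩).le)
  set b : ℝ := a + C + 1 with hbdef
  have hab : a ≤ b := by rw [hbdef]; linarith
  obtain ⟨hba, hint⟩ := key_interval S hh0 hc hu hab (hmem b hab) hF0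
  have h1 : (∫ s in (u b)..(u a), f s) = ∫ s in Ioc (u b) (u a), f s :=
    intervalIntegral.integral_of_le hba
  have h2 : (∫ s in Ioc (u b) (u a), f s) ≤ C := by
    apply setIntegral_mono_set hI
    · exact (ae_restrict_iff' measurableSet_Ioo).2 (ae_of_all _
        (fun s hs => (S.f_pos hc hh0 s ⟨hs.1, hs.2.le⟩).le))
    · have hsub : Ioc (u b) (u a) ⊆ Ioo 0 θ := fun s hs =>
        ⟨(hpos b).trans hs.1, lt_of_le_of_lt hs.2 (hmem b hab a (left_mem_Icc.2 hab)).2⟩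
      exact HasSubset.Subset.eventuallyLE hsub
  rw [hint] at h1
  rw [hbdef] at h1
  linarith [h1 ▸ h2]

/-- If `u` attains 0 then the integral converges. -/
lemma int_of_attain (S : CombSetup p θ D H h g)
    (hh0 : ∀ v ∈ Icc (0:ℝ) 1, 0 ≤ h v) (hc : 0 < c) (hu : IsTWSol p c D h g u)
    (hz : ∃ ξ : ℝ, u ξ = 0) :
    IntegrableOn (fun s => D s ^ (pconj p - 1) / (c * s + H s) ^ (pconj p - 1))
      (Ioo 0 θ) := by
  set f : ℝ → ℝ := fun s => D s ^ (pconj p - 1) / (c * s + H s) ^ (pconj p - 1) with hfdef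
  obtain ⟨m, hm⟩ : ∃ m, ∀ ξ ≤ m, 1/2 < u ξ :=
    eventually_atBot.1 (hu.lim_bot.eventually_const_lt (by norm_num))
  have hZc : IsClosed {ξ : ℝ | u ξ = 0} := isClosed_singleton.preimage hu.cont
  have hbdd : BddBelow {ξ : ℝ | u ξ = 0} := by
    refine ⟨m, fun ξ hξ => ?_⟩
    by_contra hlt
    push_neg at hlt
    have := hm ξ hlt.le
    rw [show u ξ = 0 from hξ] at this
    linarith
  set ζ : ℝ := sInf {ξ : ℝ | u ξ = 0} with hζdef
  have hζ : u ζ = 0 := hZc.csInf_mem hz hbdd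
  have hpos : ∀ ξ < ζ, 0 < u ξ := fun ξ hξ =>
    (hu.mem ξ).1.lt_of_ne (fun h12 => (notMem_of_lt_csInf hξ hbdd) h12.symm)
  -- continuity of u at ζ gives a left neighborhood where u < θ
  have hctζ : Tendsto u (nhds ζ) (nhds 0) := by
    have := hu.cont.continuousAt (x := ζ)
    rwa [ContinuousAt, hζ] at this
  obtain ⟨δ, hδ, hδθ⟩ := Metric.eventually_nhds_iff.1 (hctζ.eventually_lt_const S.hθ0)
  set a : ℝ := ζ - δ/2 with hadef
  have haζ : a < ζ := by rw [hadef]; linarith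
  have hmem : ∀ x ∈ Ico a ζ, ∀ ξ ∈ Icc a x, u ξ ∈ Ioo (0:ℝ) θ := by
    intro x hx ξ hξ
    refine ⟨hpos ξ (lt_of_le_of_lt hξ.2 hx.2), hδθ ?_⟩
    rw [Real.dist_eq, abs_of_nonpos (by linarith [hξ.1, hξ.2, hx.2] : ξ - ζ ≤ 0)]
    have : a ≤ ξ := hξ.1
    rw [hadef] at this
    linarith
  have hnear : ∀ ε > 0, ∃ x, x ∈ Ico a ζ ∧ u x < ε := by
    intro ε hε
    obtain ⟨ρ, hρ, hρε⟩ := Metric.eventually_nhds_iff.1 (hctζ.eventually_lt_const hε)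
    refine ⟨ζ - min (δ/2) (ρ/2), ⟨by rw [hadef]; simp; linarith [min_le_left (δ/2) (ρ/2)], by
      have := lt_min (half_pos hδ) (half_pos hρ); linarith⟩, ?_⟩
    apply hρε
    rw [Real.dist_eq]
    have h1 : 0 < min (δ/2) (ρ/2) := lt_min (half_pos hδ) (half_pos hρ)
    rw [abs_of_nonpos (by linarith)]
    have := min_le_right (δ/2) (ρ/2)
    linarith
  have hF0 : flux p D u a + (c * u a + H (u a)) = 0 := by
    apply Fa_zero S hh0 hc hu
    intro ε hε
    obtain ⟨x, hx, hxε⟩ := hnear ε hε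
    exact ⟨x, hx.1, hmem x hx, hxε⟩
  have hkey : ∀ x ∈ Ico a ζ, u x ≤ u a ∧
      (∫ s in (u x)..(u a), f s) = x - a :=
    fun x hx => key_interval S hh0 hc hu hx.1 (hmem x hx) hF0
  have hua : u a ∈ Ioo (0:ℝ) θ := hmem a ⟨le_rfl, haζ⟩ a (left_mem_Icc.2 le_rfl)
  -- a sequence of levels tending to 0
  have hexn : ∀ n : ℕ, ∃ x, x ∈ Ico a ζ ∧ u x < 1/(n+1) := fun n =>
    hnear (1/(n+1)) (by positivity)
  choose x hxmem hxsmall using hexn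
  have hx0 : ∀ n, 0 < u (x n) := fun n => hpos _ (hxmem n).2
  have htend : Tendsto (fun n => u (x n)) atTop (nhds 0) :=
    squeeze_zero (fun n => (hx0 n).le) (fun n => (hxsmall n).le)
      tendsto_one_div_add_atTop_nhds_zero_nat
  have hfi : ∀ n, IntegrableOn f (Ioc (u (x n)) (u a)) := by
    intro n
    have hsub : Icc (u (x n)) (u a) ⊆ Ioc 0 θ := fun s hs =>
      ⟨(hx0 n).trans_le hs.1, hs.2.trans hua.2.le⟩
    exact (((S.f_cont hc hh0).mono hsub).integrableOn_compact isCompact_Icc).mono_set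
      Ioc_subset_Icc_self
  have hbnd : ∀ n, (∫ s in Ioc (u (x n)) (u a), ‖f s‖) ≤ ζ - a := by
    intro n
    have h1 : EqOn (fun s => ‖f s‖) f (Ioc (u (x n)) (u a)) := by
      intro s hs
      simp only [Real.norm_eq_abs]
      exact abs_of_nonneg (S.f_pos hc hh0 s
        ⟨(hx0 n).trans hs.1, hs.2.trans hua.2.le⟩).le
    rw [setIntegral_congr_fun measurableSet_Ioc h1,
      ← intervalIntegral.integral_of_le (hkey _ (hxmem n)).1, (hkey _ (hxmem n)).2]
    linarith [(hxmem n).2]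
  have hIoc : IntegrableOn f (Ioc 0 (u a)) :=
    integrableOn_Ioc_of_intervalIntegral_norm_bounded_left hfi htend
      (Eventually.of_forall hbnd)
  have hIcc : IntegrableOn f (Icc (u a) θ) :=
    ((S.f_cont hc hh0).mono (fun s hs => ⟨hua.1.trans_le hs.1, hs.2⟩)).integrableOn_compact
      isCompact_Icc
  refine (hIoc.union hIcc).mono_set fun s hs => ?_
  rcases le_or_gt s (u a) with h12 | h12
  · exact Or.inl ⟨hs.1, h12⟩
  · exact Or.inr ⟨h12.le, hs.2.le⟩

end Main
/-- Asymptotics near 0.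
Under power-type behavior `D(v) ∼ v^α` as `v → 0+`, the profile attains 0 at a finite
point iff `p + α > 2`, equivalently iff `∫₀^θ D^{p'-1}/(c s + H(s))^{p'-1} ds < ∞`. -/
theorem stmt19 (p θ c α : ℝ) (D H h g u : ℝ → ℝ) (S : CombSetup p θ D H h g)
    (hh0 : ∀ v ∈ Icc (0 : ℝ) 1, 0 ≤ h v)
    (hc : 0 < c) (hu : IsTWSol p c D h g u)
    (hDlim : ∃ L > (0 : ℝ),
      Tendsto (fun v => D v / v ^ α) (nhdsWithin 0 (Ioi (0 : ℝ))) (nhds L)) :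
    ((∃ ξ : ℝ, u ξ = 0) ↔ 2 < p + α) ∧
    (IntegrableOn (fun s => D s ^ (pconj p - 1) / (c * s + H s) ^ (pconj p - 1))
        (Ioo 0 θ) ↔ 2 < p + α) := by
  have hiff2 := part2 p θ c α D H h g S hh0 hc hDlim
  exact ⟨⟨fun hzz => hiff2.1 (int_of_attain S hh0 hc hu hzz),
    fun hpa => attain_of_int S hh0 hc hu (hiff2.2 hpa)⟩, hiff2⟩
end
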